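/- arXiv:0906.0058 — 10 statements merged into one kernel-verified Lean document; each statement's English description precedes it below -/
import Mathlib

section
/- For integers k ≥ 2 and m ≥ 1 and a real number α with fractional part β = α - ⌊α⌋, the sum of ⌊α + log_k(i+1)⌋ over i ranging from k^(m-1) to k^m - 1 equals k^(m-1)·((k-1)(m + ⌊α⌋) + 1) + 1 - ⌈k^(m-β)⌉. -/
theorem stmt1 (k : ℕ) (hk : 2 ≤ k) (m : ℕ) (hm : 1 ≤ m) (α β : ℝ)
    (hβ : β = α - ⌊α⌋) :
    ∑ i ∈ Finset.Ico (k ^ (m - 1)) (k ^ m), ⌊α + Real.logb k ((i : ℝ) + 1)⌋ =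
      (k : ℤ) ^ (m - 1) * (((k : ℤ) - 1) * ((m : ℤ) + ⌊α⌋) + 1) + 1 -
        ⌈(k : ℝ) ^ ((m : ℝ) - β)⌉ := by
  have hk1 : (1 : ℝ) < (k : ℝ) := by exact_mod_cast lt_of_lt_of_le one_lt_two hk
  have hβf : β = Int.fract α := by rw [hβ, Int.fract]
  have hβ0 : 0 ≤ β := hβf ▸ Int.fract_nonneg α
  have hβ1 : β < 1 := hβf ▸ Int.fract_lt_one α
  set n := ⌊α⌋ with hn
  set C := ⌈(k : ℝ) ^ ((m : ℝ) - β)⌉ with hC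
  set a := k ^ (m - 1) with ha
  set b := k ^ m with hb
  -- cast facts for powers
  have hma : ((m - 1 : ℕ) : ℝ) = (m : ℝ) - 1 := by
    push_cast [Nat.cast_sub hm]; ring
  have hakr : ((a : ℕ) : ℝ) = (k : ℝ) ^ ((m : ℝ) - 1) := by
    rw [ha]; push_cast
    rw [← Real.rpow_natCast (k : ℝ) (m - 1), hma]
  have hbkr : ((b : ℕ) : ℝ) = (k : ℝ) ^ ((m : ℝ)) := by
    rw [hb]; push_cast
    rw [← Real.rpow_natCast (k : ℝ) m]
  -- a < C
  have haC : (a : ℤ) < C := by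
    rw [hC, Int.lt_ceil]
    push_cast
    rw [hakr]
    exact Real.rpow_lt_rpow_left_iff hk1 |>.mpr (by linarith)
  -- C ≤ b
  have hCb : C ≤ (b : ℤ) := by
    rw [hC, Int.ceil_le]
    push_cast
    rw [hbkr]
    exact Real.rpow_le_rpow_left_iff hk1 |>.mpr (by linarith)
  set c := (C - 1).toNat with hcdef
  have hc : (c : ℤ) = C - 1 := by
    rw [hcdef, Int.toNat_of_nonneg]
    omega
  have hac : a ≤ c := by
    have : (a : ℤ) ≤ (c : ℤ) := by omega
    exact_mod_cast this
  have hcb : c ≤ b := by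
    have : (c : ℤ) ≤ (b : ℤ) := by omega
    exact_mod_cast this
  rw [← Finset.sum_Ico_consecutive _ hac hcb]
  have hsum1 : ∑ i ∈ Finset.Ico a c, ⌊α + Real.logb k ((i : ℝ) + 1)⌋
      = (n + m - 1) * ((c : ℤ) - a) := by
    have hcg : ∀ i ∈ Finset.Ico a c, ⌊α + Real.logb k ((i : ℝ) + 1)⌋ = n + m - 1 := by
      intro i hi
      simp only [Finset.mem_Ico] at hi
      have hipos : (0 : ℝ) < (i : ℝ) + 1 := by positivity
      have hlow : ((m : ℝ) - 1) < Real.logb k ((i : ℝ) + 1) := by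
        rw [Real.lt_logb_iff_rpow_lt hk1 hipos, ← hakr]
        have : a ≤ i := hi.1
        have : (a : ℝ) ≤ (i : ℝ) := by exact_mod_cast this
        linarith
      have hhigh : Real.logb k ((i : ℝ) + 1) < (m : ℝ) - β := by
        rw [Real.logb_lt_iff_lt_rpow hk1 hipos]
        have h1 : (i : ℤ) + 1 ≤ C - 1 := by
          have : i < c := hi.2
          omega
        have h2 : ((i : ℝ)) + 1 ≤ (C : ℝ) - 1 := by exact_mod_cast h1
        have h3 : ((C : ℝ)) - 1 < (k : ℝ) ^ ((m : ℝ) - β) := by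
          have := Int.ceil_lt_add_one ((k : ℝ) ^ ((m : ℝ) - β))
          rw [← hC] at this
          linarith
        linarith
      have hfα : (n : ℝ) ≤ α := Int.floor_le α
      rw [Int.floor_eq_iff]
      constructor
      · push_cast; linarith
      · push_cast
        have : α = (n : ℝ) + β := by rw [hβ, hn]; ring
        linarith
    rw [Finset.sum_congr rfl hcg, Finset.sum_const, Nat.card_Ico, nsmul_eq_mul]
    rw [Nat.cast_sub hac]; ring
  have hsum2 : ∑ i ∈ Finset.Ico c b, ⌊α + Real.logb k ((i : ℝ) + 1)⌋
      = (n + m) * ((b : ℤ) - c) := by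
    have hcg : ∀ i ∈ Finset.Ico c b, ⌊α + Real.logb k ((i : ℝ) + 1)⌋ = n + m := by
      intro i hi
      simp only [Finset.mem_Ico] at hi
      have hipos : (0 : ℝ) < (i : ℝ) + 1 := by positivity
      have hlow : ((m : ℝ) - β) ≤ Real.logb k ((i : ℝ) + 1) := by
        rw [Real.le_logb_iff_rpow_le hk1 hipos]
        have h1 : C ≤ (i : ℤ) + 1 := by
          have : c ≤ i := hi.1
          omega
        have h2 : ((C : ℝ)) ≤ (i : ℝ) + 1 := by exact_mod_cast h1
        have h3 : (k : ℝ) ^ ((m : ℝ) - β) ≤ (C : ℝ) := Int.le_ceil _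
        linarith
      have hhigh : Real.logb k ((i : ℝ) + 1) ≤ (m : ℝ) := by
        rw [Real.logb_le_iff_le_rpow hk1 hipos, ← hbkr]
        have h1 : i + 1 ≤ b := hi.2
        exact_mod_cast h1
      have hfα : (n : ℝ) ≤ α := Int.floor_le α
      have hfα2 : α < (n : ℝ) + 1 := Int.lt_floor_add_one α
      have hαβ : α = (n : ℝ) + β := by rw [hβ, hn]; ring
      rw [Int.floor_eq_iff]
      constructor
      · push_cast; linarith
      · push_cast; linarith
    rw [Finset.sum_congr rfl hcg, Finset.sum_const, Nat.card_Ico, nsmul_eq_mul]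
    rw [Nat.cast_sub hcb]; ring
  rw [hsum1, hsum2]
  have hbka : (b : ℤ) = (k : ℤ) * (a : ℤ) := by
    rw [ha, hb]
    push_cast
    rw [← pow_succ']
    congr 1
    omega
  have hck : (c : ℤ) = C - 1 := hc
  have hapow : ((a : ℕ) : ℤ) = (k : ℤ) ^ (m - 1) := by push_cast [ha]; ring
  rw [hbka, hck, ← hapow]
  ring
end

section
/- For the sequence a(n) = ⌊1/2 + log₂(n+1)⌋ and b(m) = ∑_{n : |τ(n)| = m} a(n), where |τ(0)| = 0 and |τ(n)| = ⌊log₂ n⌋ + 1 for n ≥ 1, one has b(m) = (m+1)·2^(m-1) − ⌊2^(m − 1/2)⌋ for all m ≥ 1. -/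
private lemma floor_core (c : ℤ) (y : ℝ) (hy : 0 < y)
    (h1 : (2:ℝ) ^ ((c:ℝ) - 1/2) ≤ y) (h2 : y < (2:ℝ) ^ ((c:ℝ) + 1/2)) :
    ⌊(1:ℝ)/2 + Real.logb 2 y⌋ = c := by
  have hb : (1:ℝ) < 2 := one_lt_two
  rw [Int.floor_eq_iff]
  constructor
  · have : (c:ℝ) - 1/2 ≤ Real.logb 2 y := by
      rw [Real.le_logb_iff_rpow_le hb hy]; exact h1
    linarith
  · have : Real.logb 2 y < (c:ℝ) + 1/2 := by
      rw [Real.logb_lt_iff_lt_rpow hb hy]; exact h2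
    linarith

theorem stmt2 (m : ℕ) (hm : 1 ≤ m) :
    ∑ n ∈ Finset.Ico (2 ^ (m - 1) : ℕ) (2 ^ m), ⌊(1 : ℝ) / 2 + Real.logb 2 ((n : ℝ) + 1)⌋ =
      ((m : ℤ) + 1) * 2 ^ (m - 1) - ⌊(2 : ℝ) ^ ((m : ℝ) - 1 / 2)⌋ := by
  set x : ℝ := (2:ℝ) ^ ((m : ℝ) - 1/2) with hxdef
  have hcast : ((m - 1 : ℕ) : ℝ) = (m : ℝ) - 1 := by
    push_cast [Nat.cast_sub hm]; ring
  have hpowlo : ((2 ^ (m-1) : ℕ) : ℝ) = (2:ℝ) ^ ((m:ℝ) - 1) := by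
    push_cast
    rw [← hcast, Real.rpow_natCast]
  have hpowhi : ((2 ^ m : ℕ) : ℝ) = (2:ℝ) ^ ((m:ℝ)) := by
    push_cast
    rw [Real.rpow_natCast]
  have hb : (1:ℝ) < 2 := one_lt_two
  -- x is irrational
  have hxirr : Irrational x := by
    have hxeq : x = (2 ^ (m-1) : ℕ) * Real.sqrt 2 := by
      rw [hxdef, show (m:ℝ) - 1/2 = ((m:ℝ) - 1) + 1/2 by ring,
        Real.rpow_add (by norm_num), ← hcast, Real.rpow_natCast,
        ← Real.sqrt_eq_rpow]
      push_cast
      ring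
    rw [hxeq]
    exact irrational_sqrt_two.natCast_mul (by positivity)
  -- bounds on x
  have hxlo : ((2 ^ (m-1) : ℕ) : ℝ) < x := by
    rw [hpowlo, hxdef]
    exact Real.rpow_lt_rpow_left_iff hb |>.2 (by linarith)
  have hxhi : x < ((2 ^ m : ℕ) : ℝ) := by
    rw [hpowhi, hxdef]
    exact Real.rpow_lt_rpow_left_iff hb |>.2 (by linarith)
  set K : ℕ := ⌊x⌋.toNat with hKdef
  have hfloornn : (0:ℤ) ≤ ⌊x⌋ := by
    apply Int.floor_nonneg.2
    have : (0:ℝ) ≤ ((2 ^ (m-1) : ℕ) : ℝ) := by positivity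
    linarith
  have hKint : (K : ℤ) = ⌊x⌋ := Int.toNat_of_nonneg hfloornn
  have hKreal : ((K : ℝ)) ≤ x := by
    have := Int.floor_le x
    rw [← hKint] at this
    exact_mod_cast this
  have hKlt : ((K : ℝ)) < x := lt_of_le_of_ne hKreal (by
    intro h
    exact hxirr.ne_int (K : ℤ) (by exact_mod_cast h.symm))
  have hKup : x < (K : ℝ) + 1 := by
    have := Int.lt_floor_add_one x
    rw [← hKint] at this
    exact_mod_cast this
  have hK1 : (2 ^ (m-1) : ℕ) ≤ K := by
    have : ((2 ^ (m-1) : ℕ) : ℝ) < (K:ℝ) + 1 := lt_of_lt_of_le hxlo (by linarith)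
    have := Nat.lt_succ_iff.1 (by exact_mod_cast this : (2 ^ (m-1) : ℕ) < K + 1)
    exact this
  have hK2 : K ≤ 2 ^ m := by
    have : (K:ℝ) < ((2 ^ m : ℕ) : ℝ) := lt_trans hKlt hxhi
    exact le_of_lt (by exact_mod_cast this)
  -- split the sum
  rw [← Finset.sum_Ico_consecutive _ hK1 hK2]
  have hsum1 : ∑ n ∈ Finset.Ico (2 ^ (m - 1) : ℕ) K,
      ⌊(1 : ℝ) / 2 + Real.logb 2 ((n : ℝ) + 1)⌋ = (K - 2 ^ (m-1) : ℕ) * ((m:ℤ) - 1) := by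
    rw [Finset.sum_congr rfl (fun n hn => ?_), Finset.sum_const, Nat.card_Ico,
      nsmul_eq_mul]
    obtain ⟨hn1, hn2⟩ := Finset.mem_Ico.1 hn
    apply floor_core ((m:ℤ) - 1) _ (by positivity)
    · push_cast
      have h1 : (2:ℝ) ^ ((m:ℝ) - 1 - 1/2) ≤ (2:ℝ) ^ ((m:ℝ) - 1) :=
        Real.rpow_le_rpow_left_iff hb |>.2 (by linarith)
      have h2 : ((2 ^ (m-1) : ℕ) : ℝ) ≤ (n:ℝ) := by exact_mod_cast hn1
      rw [hpowlo] at h2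
      linarith
    · push_cast
      have h2 : ((n:ℝ)) + 1 ≤ (K:ℝ) := by exact_mod_cast hn2
      calc (n:ℝ) + 1 ≤ (K:ℝ) := h2
        _ < x := hKlt
        _ = (2:ℝ) ^ ((m:ℝ) - 1 + 1/2) := by rw [hxdef]; ring_nf
  have hsum2 : ∑ n ∈ Finset.Ico K (2 ^ m : ℕ),
      ⌊(1 : ℝ) / 2 + Real.logb 2 ((n : ℝ) + 1)⌋ = (2 ^ m - K : ℕ) * (m:ℤ) := by
    rw [Finset.sum_congr rfl (fun n hn => ?_), Finset.sum_const, Nat.card_Ico,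
      nsmul_eq_mul]
    obtain ⟨hn1, hn2⟩ := Finset.mem_Ico.1 hn
    apply floor_core (m:ℤ) _ (by positivity)
    · push_cast
      have h2 : (K:ℝ) ≤ (n:ℝ) := by exact_mod_cast hn1
      have : x < (n:ℝ) + 1 := by linarith
      rw [hxdef] at this
      linarith [this]
    · push_cast
      have h2 : (n:ℝ) + 1 ≤ ((2 ^ m : ℕ) : ℝ) := by exact_mod_cast hn2
      rw [hpowhi] at h2
      have h3 : (2:ℝ) ^ ((m:ℝ)) < (2:ℝ) ^ ((m:ℝ) + 1/2) :=
        Real.rpow_lt_rpow_left_iff hb |>.2 (by linarith)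
      linarith
  rw [hsum1, hsum2, ← hKint]
  have h2m : (2:ℤ) ^ m = 2 * 2 ^ (m - 1) := by
    rw [← pow_succ']
    congr 1
    omega
  push_cast [Nat.cast_sub hK1, Nat.cast_sub hK2]
  rw [h2m]
  ring
end

section
/- Let k ≥ 2 be an integer and α a real number such that k^α is irrational. Then the power series g(x) = ∑_{m≥1} (⌊−k^(m+1−β)⌋ − k·⌊−k^(m−β)⌋) x^m, where β is the fractional part of α, evaluated at x = 1/k gives g(1/k) = frac(−k^(1−β)), which is irrational. -/
theorem stmt8 (k : ℕ) (hk : 2 ≤ k) (α β : ℝ) (hβ : β = α - ⌊α⌋)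
    (hirr : Irrational ((k : ℝ) ^ α)) :
    HasSum
      (fun m : ℕ =>
        ((⌊-(k : ℝ) ^ (((m : ℝ) + 1) + 1 - β)⌋ - k * ⌊-(k : ℝ) ^ ((m : ℝ) + 1 - β)⌋ : ℤ) : ℝ) *
          (1 / (k : ℝ)) ^ (m + 1))
      (Int.fract (-(k : ℝ) ^ (1 - β))) ∧
    Irrational (Int.fract (-(k : ℝ) ^ (1 - β))) := by
  have hk2 : (2:ℝ) ≤ (k:ℝ) := by exact_mod_cast hk
  have hk0 : (0:ℝ) < (k:ℝ) := by linarith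
  set c : ℝ := (k:ℝ) ^ (1 - β) with hc
  have hcpos : 0 < c := Real.rpow_pos_of_pos hk0 _
  -- irrationality of c
  have hcirr : Irrational c := by
    rintro ⟨q, hq⟩
    apply hirr
    refine ⟨(k:ℚ) ^ (1 + ⌊α⌋) / q, ?_⟩
    have hα : α = (((1 + ⌊α⌋ : ℤ)) : ℝ) - (1 - β) := by push_cast; rw [hβ]; ring
    have h1 : (k:ℝ) ^ α = (k:ℝ) ^ ((((1 + ⌊α⌋ : ℤ)):ℤ):ℝ) / c := by
      rw [← Real.rpow_sub hk0, ← hα]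
    rw [h1, ← hq, Real.rpow_intCast]
    push_cast
    ring
  have hcfracirr : Irrational (Int.fract (-c)) := by
    have h := (hcirr.neg).sub_intCast ⌊-c⌋
    rwa [Int.self_sub_floor] at h
  set g : ℕ → ℝ := fun n => ((⌊-((k:ℝ) ^ ((n:ℝ) + 1 - β))⌋ : ℤ) : ℝ) / (k:ℝ) ^ n with hg
  have hx : ∀ n : ℕ, (k:ℝ) ^ ((n:ℝ) + 1 - β) = c * (k:ℝ) ^ n := by
    intro n
    rw [hc, show ((n:ℝ) + 1 - β) = (1 - β) + (n:ℝ) by ring, Real.rpow_add hk0,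
      Real.rpow_natCast]
  have hkp : ∀ n : ℕ, (0:ℝ) < (k:ℝ) ^ n := fun n => by positivity
  have hone : ∀ n : ℕ, ((1:ℝ)/k) ^ n * (k:ℝ) ^ n = 1 := by
    intro n; rw [← mul_pow]; field_simp; simp
  have hgub : ∀ n, g n ≤ -c := by
    intro n
    rw [hg]
    simp only
    rw [hx n, div_le_iff₀ (hkp n)]
    have := Int.floor_le (-(c * (k:ℝ) ^ n))
    nlinarith [this]
  have hglb : ∀ n, -c - (1/(k:ℝ)) ^ n ≤ g n := by
    intro n
    rw [hg]
    simp only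
    rw [hx n, le_div_iff₀ (hkp n)]
    nlinarith [Int.sub_one_lt_floor (-(c * (k:ℝ) ^ n)), hone n]
  have hf : ∀ m : ℕ,
      ((⌊-(k : ℝ) ^ (((m : ℝ) + 1) + 1 - β)⌋ - k * ⌊-(k : ℝ) ^ ((m : ℝ) + 1 - β)⌋ : ℤ) : ℝ) *
        (1 / (k : ℝ)) ^ (m + 1) = g (m+1) - g m := by
    intro m
    rw [hg]
    simp only
    push_cast
    have hkn : ((k:ℝ)) ≠ 0 := by linarith
    field_simp
    rw [mul_assoc _ ((1 / (k:ℝ)) ^ (m + 1)), hone (m+1)]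
    ring
  have hsum : ∀ n, ∑ i ∈ Finset.range n,
      (((⌊-(k : ℝ) ^ (((i : ℝ) + 1) + 1 - β)⌋ - k * ⌊-(k : ℝ) ^ ((i : ℝ) + 1 - β)⌋ : ℤ) : ℝ) *
        (1 / (k : ℝ)) ^ (i + 1)) = g n - g 0 := by
    intro n
    simp only [hf]
    exact Finset.sum_range_sub g n
  have hg0 : g 0 = ((⌊-c⌋ : ℤ) : ℝ) := by
    rw [hg]
    norm_num
    rw [hc]
  have hpow : Filter.Tendsto (fun n : ℕ => ((1:ℝ)/k) ^ n) Filter.atTop (nhds 0) := by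
    apply tendsto_pow_atTop_nhds_zero_of_lt_one
    · positivity
    · rw [div_lt_one hk0]; linarith
  have ht : Filter.Tendsto g Filter.atTop (nhds (-c)) := by
    have h1 : Filter.Tendsto (fun n : ℕ => -c - ((1:ℝ)/k) ^ n) Filter.atTop (nhds (-c - 0)) :=
      (tendsto_const_nhds).sub hpow
    rw [sub_zero] at h1
    exact tendsto_of_tendsto_of_tendsto_of_le_of_le h1 tendsto_const_nhds hglb hgub
  have ht2 : Filter.Tendsto (fun n : ℕ => ∑ i ∈ Finset.range n,
      (((⌊-(k : ℝ) ^ (((i : ℝ) + 1) + 1 - β)⌋ - k * ⌊-(k : ℝ) ^ ((i : ℝ) + 1 - β)⌋ : ℤ) : ℝ) *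
        (1 / (k : ℝ)) ^ (i + 1))) Filter.atTop (nhds (Int.fract (-c))) := by
    have : Int.fract (-c) = -c - g 0 := by rw [hg0, ← Int.self_sub_floor]
    rw [this]
    simp only [hsum]
    exact ht.sub tendsto_const_nhds
  have hsummable : Summable (fun m : ℕ =>
      ((⌊-(k : ℝ) ^ (((m : ℝ) + 1) + 1 - β)⌋ - k * ⌊-(k : ℝ) ^ ((m : ℝ) + 1 - β)⌋ : ℤ) : ℝ) *
        (1 / (k : ℝ)) ^ (m + 1)) := by
    have hgeo : Summable (fun m : ℕ => ((1:ℝ)/k) ^ m) :=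
      summable_geometric_of_lt_one (by positivity) (by rw [div_lt_one hk0]; linarith)
    apply Summable.of_abs
    apply Summable.of_nonneg_of_le (fun m => abs_nonneg _) _ hgeo
    · intro m
      rw [hf m, abs_le]
      have h1 := hgub m
      have h2 := hgub (m+1)
      have h3 := hglb m
      have h4 := hglb (m+1)
      have h5 : ((1:ℝ)/k) ^ (m+1) ≤ ((1:ℝ)/k) ^ m := by
        rw [pow_succ]
        have hle1 : (1:ℝ)/k ≤ 1 := by rw [div_le_one hk0]; linarith
        nlinarith [pow_nonneg (by positivity : (0:ℝ) ≤ 1/(k:ℝ)) m]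
      constructor <;> nlinarith
  constructor
  · have hS := hsummable.hasSum
    have h3 := hS.tendsto_sum_nat
    have h4 := tendsto_nhds_unique h3 ht2
    rw [← h4]
    exact hS
  · exact hcfracirr
end

section
/- Let k ≥ 2 be an integer and α a real number such that k^α is rational. Then the sequence d(m) = ⌊−k^(m+1−β)⌋ − k·⌊−k^(m−β)⌋, where β = α − ⌊α⌋, is eventually periodic. -/
lemma pow_mod_eventually_periodic (k a : ℕ) (ha : 0 < a) :
    ∃ N p : ℕ, 0 < p ∧ ∀ m ≥ N, k ^ (m + p) % a = k ^ m % a := by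
  obtain ⟨i, j, hlt, h⟩ : ∃ i j, i < j ∧ k ^ i % a = k ^ j % a := by
    obtain ⟨i, hi, j, hj, hij, h⟩ := Finset.exists_ne_map_eq_of_card_lt_of_maps_to
      (s := Finset.range (a + 1)) (t := Finset.range a)
      (by simp) (f := fun m => k ^ m % a) (fun m _ => Finset.mem_range.2 (Nat.mod_lt _ ha))
    rcases lt_or_gt_of_ne hij with h' | h'
    · exact ⟨i, j, h', h⟩
    · exact ⟨j, i, h', h.symm⟩
  refine ⟨i, j - i, by omega, ?_⟩
  intro m hm
  obtain ⟨c, rfl⟩ : ∃ c, m = i + c := ⟨m - i, by omega⟩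
  have : k ^ (i + c + (j - i)) = k ^ j * k ^ c := by
    rw [← pow_add]; congr 1; omega
  rw [this, pow_add]
  exact (Nat.ModEq.mul_right (k ^ c) h.symm)

theorem stmt10 (k : ℕ) (hk : 2 ≤ k) (α β : ℝ) (hβ : β = α - ⌊α⌋)
    (hrat : ∃ q : ℚ, (k : ℝ) ^ α = (q : ℝ)) :
    ∃ N p : ℕ, 0 < p ∧ ∀ m ≥ N, 1 ≤ m →
      ⌊-(k : ℝ) ^ ((m : ℝ) + (p : ℝ) + 1 - β)⌋ - k * ⌊-(k : ℝ) ^ ((m : ℝ) + (p : ℝ) - β)⌋ =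
        ⌊-(k : ℝ) ^ ((m : ℝ) + 1 - β)⌋ - k * ⌊-(k : ℝ) ^ ((m : ℝ) - β)⌋ := by
  obtain ⟨q, hq⟩ := hrat
  have hk0 : (0 : ℝ) < (k : ℝ) := by
    have : (0:ℕ) < k := by omega
    exact_mod_cast this
  have hkq0 : (k : ℚ) ≠ 0 := by
    have : (0:ℕ) < k := by omega
    exact_mod_cast this.ne'
  set r : ℚ := q * (k : ℚ) ^ (-⌊α⌋) with hr
  have hkβ : (k : ℝ) ^ β = (r : ℝ) := by
    have h1 : (k : ℝ) ^ β = (k : ℝ) ^ α * (k : ℝ) ^ (-(⌊α⌋ : ℝ)) := by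
      rw [← Real.rpow_add hk0, hβ, sub_eq_add_neg]
    rw [h1, hq]
    have h2 : (k : ℝ) ^ (-(⌊α⌋ : ℝ)) = (k : ℝ) ^ (-⌊α⌋ : ℤ) := by
      rw [← Real.rpow_intCast]
      congr 1
      push_cast
      ring
    rw [h2, hr]
    push_cast
    ring
  have hrpos : 0 < r := by
    have h := Real.rpow_pos_of_pos hk0 β
    rw [hkβ] at h
    exact_mod_cast h
  set a : ℕ := r.num.toNat with hadef
  set b : ℕ := r.den with hbdef
  have ha : 0 < a := by
    have := Rat.num_pos.2 hrpos
    omega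
  have hreq : r = (a : ℚ) / (b : ℚ) := by
    have hnum : (r.num.toNat : ℤ) = r.num := Int.toNat_of_nonneg (Rat.num_pos.2 hrpos).le
    rw [hadef, hbdef,
      show ((r.num.toNat : ℕ) : ℚ) = (r.num : ℚ) by exact_mod_cast congrArg (Int.cast : ℤ → ℚ) hnum]
    exact (Rat.num_div_den r).symm
  -- key floor formula
  have key : ∀ m : ℕ, ⌊-(k : ℝ) ^ ((m : ℝ) - β)⌋ = (-(k ^ m * b : ℤ)) / (a : ℤ) := by
    intro m
    have h1 : (k : ℝ) ^ ((m : ℝ) - β) = (k : ℝ) ^ (m : ℝ) / (k : ℝ) ^ β :=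
      Real.rpow_sub hk0 _ _
    have h2 : (k : ℝ) ^ (m : ℝ) = ((k ^ m : ℚ) : ℝ) := by
      rw [Real.rpow_natCast]; push_cast; ring
    have h3 : -(k : ℝ) ^ ((m : ℝ) - β) = ((-(k ^ m : ℚ) / r : ℚ) : ℝ) := by
      rw [h1, h2, hkβ]; push_cast; ring
    rw [h3, Rat.floor_cast]
    have h4 : (-(k ^ m : ℚ) / r : ℚ) = ((-(k ^ m * b : ℤ) : ℤ) : ℚ) / ((a : ℕ) : ℚ) := by
      rw [hreq]
      have hb0 : ((b : ℚ)) ≠ 0 := by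
        have : 0 < b := r.den_pos
        exact_mod_cast this.ne'
      have ha0 : ((a : ℚ)) ≠ 0 := by exact_mod_cast ha.ne'
      field_simp
      try push_cast
      try ring
    rw [h4, Rat.floor_intCast_div_natCast]
  obtain ⟨N, p, hp, hper⟩ := pow_mod_eventually_periodic k a ha
  refine ⟨N, p, hp, ?_⟩
  intro m hm _
  have e1 : (m : ℝ) + (p : ℝ) + 1 - β = ((m + p + 1 : ℕ) : ℝ) - β := by push_cast; ring
  have e2 : (m : ℝ) + (p : ℝ) - β = ((m + p : ℕ) : ℝ) - β := by push_cast; ring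
  have e3 : (m : ℝ) + 1 - β = ((m + 1 : ℕ) : ℝ) - β := by push_cast; ring
  rw [e1, e2, e3, key, key, key, key]
  -- now integer arithmetic
  have hmod : k ^ (m + p) % a = k ^ m % a := hper m hm
  have hle : k ^ m ≤ k ^ (m + p) := Nat.pow_le_pow_right (by omega) (by omega)
  have hdvdn : a ∣ k ^ (m + p) - k ^ m := (Nat.modEq_iff_dvd' hle).mp hmod.symm
  have hdvd : (a : ℤ) ∣ (k ^ (m + p) : ℤ) - (k ^ m : ℤ) := by
    obtain ⟨c, hc⟩ := hdvdn
    refine ⟨(c : ℤ), ?_⟩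
    zify [hle] at hc
    exact hc
  obtain ⟨t, ht⟩ := hdvd
  have ha0 : (a : ℤ) ≠ 0 := by exact_mod_cast ha.ne'
  have hpow1 : (k ^ (m + p) : ℤ) = k ^ m + a * t := by linarith [ht]
  have hpow2 : (k ^ (m + p + 1) : ℤ) = k ^ (m + 1) + a * (k * t) := by
    have : (k ^ (m + p + 1) : ℤ) = k * k ^ (m + p) := by ring
    rw [this, hpow1]; ring
  have d1 : (-(k ^ (m + p) * b : ℤ)) = -(k ^ m * b) + (a : ℤ) * (-(t * b)) := by
    rw [hpow1]; ring
  have d2 : (-(k ^ (m + p + 1) * b : ℤ)) = -(k ^ (m + 1) * b) + (a : ℤ) * (-(k * t * b)) := by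
    rw [hpow2]; ring
  rw [d1, d2, Int.add_mul_ediv_left _ _ ha0, Int.add_mul_ediv_left _ _ ha0]
  ring
end

section
/- Let k ≥ 2 be an integer and α a real number, and define b(m) = ∑_{n=k^(m−1)}^{k^m − 1} ⌊α + log_k(n+1)⌋ for m ≥ 1, with b(0) = ⌊α⌋. Then the generating function f(x) = ∑_{m≥0} b(m) x^m is a rational function of x if and only if k^α is rational. -/
open PowerSeries Polynomial

/-- A sequence has rational generating function (denominator nonzero at 0). -/
def RecR (u : ℕ → ℝ) : Prop :=
  ∃ (Q : Polynomial ℝ) (N : ℕ), Q.coeff 0 ≠ 0 ∧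
    ∀ m ≥ N, PowerSeries.coeff m (PowerSeries.mk u * (Q : PowerSeries ℝ)) = 0

/-- tail-vanishing power series is a polynomial -/
lemma eq_poly_of_tail_zero (φ : PowerSeries ℝ) (N : ℕ)
    (h : ∀ m ≥ N, PowerSeries.coeff m φ = 0) :
    ∃ P : Polynomial ℝ, (P : PowerSeries ℝ) = φ := by
  refine ⟨∑ i ∈ Finset.range N, Polynomial.C (PowerSeries.coeff i φ) * Polynomial.X ^ i, ?_⟩
  ext n
  push_cast [Polynomial.coeff_coe, Polynomial.finset_sum_coeff, Polynomial.coeff_C_mul,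
    Polynomial.coeff_X_pow, mul_ite, mul_one, mul_zero]
  rw [Finset.sum_ite_eq (Finset.range N) n (fun i => PowerSeries.coeff i φ)]
  by_cases hn : n < N
  · simp [Finset.mem_range.mpr hn]
  · simp only [Finset.mem_range, hn, if_false]
    exact (h n (le_of_not_gt hn)).symm

lemma recR_iff (u : ℕ → ℝ) :
    (∃ P Q : Polynomial ℝ, Q.coeff 0 ≠ 0 ∧
        (PowerSeries.mk u) * (Q : PowerSeries ℝ) = (P : PowerSeries ℝ)) ↔ RecR u := by
  constructor
  · rintro ⟨P, Q, hQ, hPQ⟩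
    refine ⟨Q, P.natDegree + 1, hQ, fun m hm => ?_⟩
    rw [hPQ]
    rw [Polynomial.coeff_coe]
    exact Polynomial.coeff_eq_zero_of_natDegree_lt (by omega)
  · rintro ⟨Q, N, hQ, h⟩
    obtain ⟨P, hP⟩ := eq_poly_of_tail_zero _ N h
    exact ⟨P, Q, hQ, hP.symm⟩


lemma tail_zero_mul (φ : PowerSeries ℝ) (N : ℕ)
    (h : ∀ m ≥ N, PowerSeries.coeff m φ = 0) (Q : Polynomial ℝ) :
    ∀ m ≥ N + Q.natDegree, PowerSeries.coeff m (φ * (Q : PowerSeries ℝ)) = 0 := by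
  intro m hm
  rw [PowerSeries.coeff_mul]
  apply Finset.sum_eq_zero
  rintro ⟨i, j⟩ hij
  rw [Finset.HasAntidiagonal.mem_antidiagonal] at hij
  rcases le_or_gt N i with hi | hi
  · simp [h i hi]
  · have : Q.natDegree < j := by omega
    rw [Polynomial.coeff_coe, Polynomial.coeff_eq_zero_of_natDegree_lt this, mul_zero]

lemma RecR.sub {u v : ℕ → ℝ} (hu : RecR u) (hv : RecR v) : RecR (fun m => u m - v m) := by
  obtain ⟨Qu, Nu, hQu, hu⟩ := hu
  obtain ⟨Qv, Nv, hQv, hv⟩ := hv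
  refine ⟨Qu * Qv, max (Nu + Qv.natDegree) (Nv + Qu.natDegree), ?_, ?_⟩
  · rw [Polynomial.mul_coeff_zero]; exact mul_ne_zero hQu hQv
  · intro m hm
    have hmk : PowerSeries.mk (fun m => u m - v m) = PowerSeries.mk u - PowerSeries.mk v := by
      ext n; simp
    rw [hmk, Polynomial.coe_mul, sub_mul, map_sub]
    have h1 : (PowerSeries.mk u : PowerSeries ℝ) * (Qu * Qv : PowerSeries ℝ)
        = (PowerSeries.mk u * Qu) * Qv := by ring
    have h2 : (PowerSeries.mk v : PowerSeries ℝ) * ((Qu : PowerSeries ℝ) * Qv)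
        = (PowerSeries.mk v * Qv) * Qu := by ring
    rw [h1, h2, tail_zero_mul _ _ hu Qv m (le_trans (le_max_left _ _) hm),
      tail_zero_mul _ _ hv Qu m (le_trans (le_max_right _ _) hm), sub_zero]


lemma coeff_mul_one_sub (φ : PowerSeries ℝ) (r : ℝ) (t : ℕ) (m : ℕ) (hm : t ≤ m) :
    PowerSeries.coeff m (φ * ((1 - Polynomial.C r * Polynomial.X ^ t : Polynomial ℝ) : PowerSeries ℝ)) =
      PowerSeries.coeff m φ - r * PowerSeries.coeff (m - t) φ := by
  have hcoe : ((1 - Polynomial.C r * Polynomial.X ^ t : Polynomial ℝ) : PowerSeries ℝ)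
      = 1 - PowerSeries.C r * PowerSeries.X ^ t := by push_cast; ring
  rw [hcoe, mul_sub, mul_one, map_sub]
  congr 1
  have h2 : φ * (PowerSeries.C r * PowerSeries.X ^ t) = (φ * PowerSeries.C r) * PowerSeries.X ^ t := by ring
  rw [h2]
  obtain ⟨n, rfl⟩ : ∃ n, m = n + t := ⟨m - t, by omega⟩
  rw [PowerSeries.coeff_mul_X_pow]
  simp [PowerSeries.coeff_mul_C, mul_comm]

lemma coeff_one_sub_zero (r : ℝ) (t : ℕ) (ht : 1 ≤ t) :
    (1 - Polynomial.C r * Polynomial.X ^ t : Polynomial ℝ).coeff 0 ≠ 0 := by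
  rw [Polynomial.coeff_sub, Polynomial.coeff_one, Polynomial.coeff_C_mul, Polynomial.coeff_X_pow]
  have : ¬ (0 = t) := by omega
  simp [this]

-- geometric sequences
lemma recR_geom (x r : ℝ) : RecR (fun m => x * r ^ m) := by
  refine ⟨1 - Polynomial.C r * Polynomial.X ^ 1, 1, coeff_one_sub_zero r 1 le_rfl, ?_⟩
  intro m hm
  rw [coeff_mul_one_sub _ _ _ _ hm]
  simp only [PowerSeries.coeff_mk]
  obtain ⟨n, rfl⟩ : ∃ n, m = n + 1 := ⟨m - 1, by omega⟩
  simp [pow_succ]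
  ring

-- m * r^m
lemma recR_mgeom (x r : ℝ) : RecR (fun m => x * m * r ^ m) := by
  refine ⟨(1 - Polynomial.C r * Polynomial.X ^ 1) * (1 - Polynomial.C r * Polynomial.X ^ 1), 2, ?_, ?_⟩
  · rw [Polynomial.mul_coeff_zero]
    exact mul_ne_zero (coeff_one_sub_zero r 1 le_rfl) (coeff_one_sub_zero r 1 le_rfl)
  · intro m hm
    rw [Polynomial.coe_mul, ← mul_assoc]
    obtain ⟨n, rfl⟩ : ∃ n, m = n + 2 := ⟨m - 2, by omega⟩
    rw [coeff_mul_one_sub _ _ _ _ (by omega : 1 ≤ n + 2)]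
    rw [coeff_mul_one_sub _ _ _ _ (by omega : 1 ≤ n + 2)]
    have : n + 2 - 1 = n + 1 := by omega
    rw [this, coeff_mul_one_sub _ _ _ _ (by omega : 1 ≤ n + 1)]
    simp only [PowerSeries.coeff_mk]
    have : n + 1 - 1 = n := by omega
    rw [this]
    push_cast
    rw [pow_succ, pow_succ]
    ring

-- finitely supported
lemma recR_finsupp (u : ℕ → ℝ) (N : ℕ) (h : ∀ m ≥ N, u m = 0) : RecR u := by
  refine ⟨1, N, by simp, ?_⟩
  intro m hm
  simp [Polynomial.coe_one, h m hm]


-- eventual periodicity of k^m mod d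
lemma pow_mod_eventually_periodic_s11 (k d : ℕ) (hd : 0 < d) :
    ∃ N T : ℕ, 1 ≤ T ∧ ∀ m ≥ N, k ^ (m + T) ≡ k ^ m [MOD d] := by
  have hmaps : ∀ m ∈ Finset.range (d + 1), k ^ m % d ∈ Finset.range d := by
    intro m _; exact Finset.mem_range.mpr (Nat.mod_lt _ hd)
  obtain ⟨m1, hm1, m2, hm2, hne, heq⟩ :=
    Finset.exists_ne_map_eq_of_card_lt_of_maps_to (by simp) hmaps
  wlog hlt : m1 < m2 generalizing m1 m2
  · exact this m2 hm2 m1 hm1 hne.symm heq.symm (by omega)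
  refine ⟨m1, m2 - m1, by omega, ?_⟩
  intro m hm
  have h1 : k ^ m2 ≡ k ^ m1 [MOD d] := heq.symm
  have : k ^ (m - m1) * k ^ m2 ≡ k ^ (m - m1) * k ^ m1 [MOD d] := h1.mul_left _
  calc k ^ (m + (m2 - m1)) = k ^ (m - m1) * k ^ m2 := by
        rw [← pow_add]; congr 1; omega
    _ ≡ k ^ (m - m1) * k ^ m1 [MOD d] := this
    _ = k ^ m := by rw [← pow_add]; congr 1; omega

lemma ceil_periodic_diff (k : ℕ) (hk : 2 ≤ k) (θ : ℝ) (q : ℚ) (hq : θ = q) :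
    ∃ N T : ℕ, 1 ≤ T ∧ ∀ m ≥ N,
      ⌈θ * (k:ℝ) ^ (m + T + 1)⌉ - k * ⌈θ * (k:ℝ) ^ (m + T)⌉
        = ⌈θ * (k:ℝ) ^ (m + 1)⌉ - k * ⌈θ * (k:ℝ) ^ m⌉ := by
  set p : ℤ := q.num
  set d : ℤ := (q.den : ℤ)
  have hd0 : 0 < d := by positivity
  set a : ℕ → ℤ := fun m => ⌈θ * (k:ℝ) ^ m⌉ with ha
  set r : ℕ → ℤ := fun m => d * a m - p * (k:ℤ) ^ m with hr
  have hd0R : (0:ℝ) < (d:ℝ) := by exact_mod_cast hd0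
  have hpd : (p : ℝ) = θ * d := by
    rw [hq, Rat.cast_def]
    field_simp
    simp only [d, p]
    push_cast
    ring
  have hrange : ∀ m, 0 ≤ r m ∧ r m < d := by
    intro m
    have h1 : θ * (k:ℝ) ^ m ≤ a m := Int.le_ceil _
    have h2 : (a m : ℝ) < θ * (k:ℝ) ^ m + 1 := Int.ceil_lt_add_one _
    have hk1 : (0:ℝ) ≤ (k:ℝ) ^ m := by positivity
    constructor
    · have h3 : (0:ℝ) ≤ d * a m - p * (k:ℤ) ^ m := by
        rw [hpd]; push_cast
        nlinarith [mul_le_mul_of_nonneg_left h1 hd0R.le]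
      have h4 : (0:ℝ) ≤ (r m : ℝ) := by simp only [hr]; push_cast; push_cast at h3; linarith
      exact_mod_cast h4
    · have h3 : ((d:ℝ) * a m - p * (k:ℤ) ^ m : ℝ) < d := by
        rw [hpd]; push_cast
        nlinarith [mul_lt_mul_of_pos_left h2 hd0R]
      have h4 : (r m : ℝ) < d := by simp only [hr]; push_cast; push_cast at h3; linarith
      exact_mod_cast h4
  obtain ⟨N, T, hT, hper⟩ := pow_mod_eventually_periodic_s11 k q.den q.den_pos
  have hrper : ∀ m ≥ N, r (m + T) = r m := by
    intro m hm
    have hdvd : d ∣ (k:ℤ) ^ (m + T) - (k:ℤ) ^ m := by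
      have h5 := (hper m hm).dvd
      have h6 : d ∣ ((k ^ m : ℕ) : ℤ) - ((k ^ (m+T) : ℕ) : ℤ) := by exact_mod_cast h5
      have h7 := (dvd_neg).mpr h6
      rw [neg_sub] at h7
      push_cast at h7
      exact h7
    have hdvd2 : d ∣ r (m + T) - r m := by
      have : r (m + T) - r m = d * (a (m+T) - a m) - p * ((k:ℤ)^(m+T) - (k:ℤ)^m) := by
        simp only [hr]; push_cast; ring
      rw [this]
      exact dvd_sub (Dvd.intro _ rfl) (Dvd.dvd.mul_left hdvd p)
    obtain ⟨c, hc⟩ := hdvd2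
    have h1 := hrange m
    have h2 := hrange (m + T)
    have habs : |d * c| < d := by
      rw [← hc, abs_lt]
      constructor <;> [linarith [h1.2, h2.1]; linarith [h1.1, h2.2]]
    rw [abs_mul, abs_of_pos hd0] at habs
    have hc0 : |c| < 1 := by
      by_contra hcon
      push_neg at hcon
      nlinarith [abs_nonneg c]
    have : c = 0 := Int.abs_lt_one_iff.mp hc0
    rw [this, mul_zero] at hc
    omega
  refine ⟨N, T, hT, ?_⟩
  intro m hm
  have key : ∀ n ≥ N, d * (a (n + T + 1) - k * a (n + T)) = d * (a (n+1) - k * a n) := by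
    intro n hn
    have e1 : d * (a (n + T + 1) - k * a (n + T)) = r (n + T + 1) - k * r (n + T)
        + p * ((k:ℤ)^(n+T+1) - k * (k:ℤ)^(n+T)) := by simp only [hr]; ring
    have e2 : d * (a (n + 1) - k * a n) = r (n + 1) - k * r n
        + p * ((k:ℤ)^(n+1) - k * (k:ℤ)^n) := by simp only [hr]; ring
    have p1 : (k:ℤ)^(n+T+1) - k * (k:ℤ)^(n+T) = 0 := by rw [pow_succ]; ring
    have p2 : (k:ℤ)^(n+1) - k * (k:ℤ)^n = 0 := by rw [pow_succ]; ring
    have q1 : r (n + T + 1) = r (n + 1) := by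
      have := hrper (n+1) (by omega)
      rw [show n + T + 1 = n + 1 + T by ring]
      exact this
    rw [e1, e2, p1, p2, q1, hrper n hn]
  have := key m hm
  have hd0' : d ≠ 0 := by omega
  have := mul_left_cancel₀ hd0' this
  simpa only [ha] using this

lemma recR_ceil_of_rat (k : ℕ) (hk : 2 ≤ k) (θ : ℝ) (q : ℚ) (hq : θ = q) :
    RecR (fun m => (⌈θ * (k:ℝ) ^ m⌉ : ℝ)) := by
  obtain ⟨N, T, hT, hper⟩ := ceil_periodic_diff k hk θ q hq
  refine ⟨(1 - Polynomial.C (k:ℝ) * Polynomial.X ^ 1) * (1 - Polynomial.C (1:ℝ) * Polynomial.X ^ T),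
    N + T + 1, ?_, ?_⟩
  · rw [Polynomial.mul_coeff_zero]
    exact mul_ne_zero (coeff_one_sub_zero _ 1 le_rfl) (coeff_one_sub_zero _ T hT)
  · intro m hm
    obtain ⟨n, rfl, hn⟩ : ∃ n, m = n + T + 1 ∧ N ≤ n := ⟨m - T - 1, by omega, by omega⟩
    rw [Polynomial.coe_mul, ← mul_assoc]
    rw [coeff_mul_one_sub _ _ _ _ (by omega : T ≤ n + T + 1)]
    rw [coeff_mul_one_sub _ _ _ _ (by omega : 1 ≤ n + T + 1)]
    have e1 : n + T + 1 - T = n + 1 := by omega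
    have e2 : n + T + 1 - 1 = n + T := by omega
    rw [e1, e2, coeff_mul_one_sub _ _ _ _ (by omega : 1 ≤ n + 1)]
    have e3 : n + 1 - 1 = n := by omega
    rw [e3]
    simp only [PowerSeries.coeff_mk, one_mul]
    have := hper n hn
    have hcast : (⌈θ * (k:ℝ) ^ (n + T + 1)⌉ : ℝ) - k * (⌈θ * (k:ℝ) ^ (n + T)⌉ : ℝ)
        = (⌈θ * (k:ℝ) ^ (n + 1)⌉ : ℝ) - k * (⌈θ * (k:ℝ) ^ n⌉ : ℝ) := by
      exact_mod_cast congrArg (fun z : ℤ => (z : ℝ)) this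
    linarith [hcast]
lemma coeff_mk_mul_eq_sum (u : ℕ → ℝ) (Q : Polynomial ℝ) (m : ℕ) (hm : Q.natDegree ≤ m) :
    PowerSeries.coeff m (PowerSeries.mk u * (Q : PowerSeries ℝ))
      = ∑ j ∈ Finset.range (Q.natDegree + 1), Q.coeff j * u (m - j) := by
  rw [PowerSeries.coeff_mul]
  rw [Finset.Nat.sum_antidiagonal_eq_sum_range_succ_mk]
  have h1 : ∀ i ∈ Finset.range (m+1),
      PowerSeries.coeff i (PowerSeries.mk u) * PowerSeries.coeff (m - i) (Q : PowerSeries ℝ)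
        = u i * Q.coeff (m - i) := by
    intro i _
    rw [PowerSeries.coeff_mk, Polynomial.coeff_coe]
  rw [Finset.sum_congr rfl h1]
  rw [← Finset.sum_range_reflect]
  have h2 : ∀ j ∈ Finset.range (m+1),
      u (m + 1 - 1 - j) * Q.coeff (m - (m + 1 - 1 - j)) = Q.coeff j * u (m - j) := by
    intro j hj
    rw [Finset.mem_range] at hj
    have e1 : m + 1 - 1 - j = m - j := by omega
    have e2 : m - (m - j) = j := by omega
    rw [e1, e2, mul_comm]
  rw [Finset.sum_congr rfl h2]
  symm
  apply Finset.sum_subset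
  · intro j hj
    rw [Finset.mem_range] at *
    omega
  · intro j hj1 hj2
    rw [Finset.mem_range] at *
    rw [Polynomial.coeff_eq_zero_of_natDegree_lt (by omega), zero_mul]
lemma d_eventually_periodic (k : ℕ) (hk : 2 ≤ k) (θ : ℝ)
    (h : RecR (fun m => (⌈θ * (k:ℝ) ^ m⌉ : ℝ))) :
    ∃ M T : ℕ, 1 ≤ T ∧ ∀ m ≥ M,
      ⌈θ * (k:ℝ) ^ (m + T + 1)⌉ - k * ⌈θ * (k:ℝ) ^ (m + T)⌉
        = ⌈θ * (k:ℝ) ^ (m + 1)⌉ - k * ⌈θ * (k:ℝ) ^ m⌉ := by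
  obtain ⟨Q, N0, hQ0, hvan⟩ := h
  set u : ℕ → ℝ := fun m => (⌈θ * (k:ℝ) ^ m⌉ : ℝ) with hu
  set D := Q.natDegree with hD
  set N1 := max N0 D with hN1
  set d : ℕ → ℤ := fun m => ⌈θ * (k:ℝ) ^ (m+1)⌉ - k * ⌈θ * (k:ℝ) ^ m⌉ with hd
  -- recurrence for u
  have hrecA : ∀ m ≥ N1, ∑ j ∈ Finset.range (D + 1), Q.coeff j * u (m - j) = 0 := by
    intro m hm
    have h1 := hvan m (le_trans (le_max_left _ _) hm)
    rwa [coeff_mk_mul_eq_sum u Q m (le_trans (le_max_right _ _) hm)] at h1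
  -- recurrence for d
  have hrecD : ∀ m ≥ N1, ∑ j ∈ Finset.range (D + 1), Q.coeff j * (d (m - j) : ℝ) = 0 := by
    intro m hm
    have h1 := hrecA (m + 1) (by omega)
    have h2 := hrecA m hm
    have key : ∀ j ∈ Finset.range (D + 1),
        Q.coeff j * (d (m - j) : ℝ) = Q.coeff j * u (m + 1 - j) - k * (Q.coeff j * u (m - j)) := by
      intro j hj
      rw [Finset.mem_range] at hj
      have hjm : j ≤ m := le_trans (by omega) (le_trans (le_max_right _ _) hm)
      have e1 : m - j + 1 = m + 1 - j := by omega
      simp only [hd, hu]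
      push_cast
      rw [e1]
      ring
    rw [Finset.sum_congr rfl key, Finset.sum_sub_distrib, ← Finset.mul_sum, h1, h2, mul_zero,
      sub_zero]
  -- determinism
  have hdet : ∀ m ≥ N1, (d m : ℝ)
      = -(Q.coeff 0)⁻¹ * ∑ j ∈ Finset.range D, Q.coeff (j + 1) * (d (m - (j + 1)) : ℝ) := by
    intro m hm
    have h1 := hrecD m hm
    rw [Finset.sum_range_succ'] at h1
    have : m - 0 = m := rfl
    rw [this] at h1
    field_simp
    linarith [h1]
  -- bounds on d
  have hbound : ∀ m, 1 - (k:ℤ) ≤ d m ∧ d m ≤ 0 := by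
    intro m
    have hkR : (0:ℝ) < (k:ℝ) := by positivity
    have c1 : θ * (k:ℝ) ^ (m+1) ≤ (⌈θ * (k:ℝ) ^ (m+1)⌉ : ℝ) := Int.le_ceil _
    have c2 : (⌈θ * (k:ℝ) ^ (m+1)⌉ : ℝ) < θ * (k:ℝ) ^ (m+1) + 1 := Int.ceil_lt_add_one _
    have c3 : θ * (k:ℝ) ^ m ≤ (⌈θ * (k:ℝ) ^ m⌉ : ℝ) := Int.le_ceil _
    have c4 : (⌈θ * (k:ℝ) ^ m⌉ : ℝ) < θ * (k:ℝ) ^ m + 1 := Int.ceil_lt_add_one _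
    have hpow : (k:ℝ) ^ (m+1) = k * (k:ℝ) ^ m := by rw [pow_succ]; ring
    have hpow2 : θ * (k:ℝ) ^ (m+1) = (k:ℝ) * (θ * (k:ℝ) ^ m) := by rw [pow_succ]; ring
    have hb1 : (d m : ℝ) < 1 := by
      simp only [hd]; push_cast
      linarith [c2, hpow2, mul_le_mul_of_nonneg_left c3 hkR.le]
    have hb2 : (-(k:ℝ)) < (d m : ℝ) := by
      simp only [hd]; push_cast
      linarith [c1, hpow2, mul_lt_mul_of_pos_left c4 hkR]
    have hb1' : d m < 1 := by exact_mod_cast hb1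
    have hb2' : -(k:ℤ) < d m := by exact_mod_cast hb2
    omega
  -- pigeonhole on windows of length D
  have hkpos : 0 < k := by omega
  have code : ∀ i : ℕ, ∀ j : Fin D, (d (N1 + i + j) + (k - 1)).toNat < k := by
    intro i j
    have := hbound (N1 + i + j)
    omega
  set g : ℕ → (Fin D → Fin k) := fun i => fun j => ⟨(d (N1 + i + j) + (k - 1)).toNat, code i j⟩
    with hg
  have hcard : (Finset.univ : Finset (Fin D → Fin k)).card = k ^ D := by
    simp [Fintype.card_fun]
  obtain ⟨i1, hi1, i2, hi2, hne, heq⟩ :=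
    Finset.exists_ne_map_eq_of_card_lt_of_maps_to
      (s := Finset.range (k ^ D + 1)) (t := (Finset.univ : Finset (Fin D → Fin k)))
      (by rw [hcard]; simp) (fun i _ => Finset.mem_univ (g i))
  wlog hlt : i1 < i2 generalizing i1 i2
  · exact this i2 hi2 i1 hi1 hne.symm heq.symm (by omega)
  -- initial window equality
  have hwin : ∀ j, j < D → d (N1 + i1 + j) = d (N1 + i2 + j) := by
    intro j hj
    have := congrFun heq ⟨j, hj⟩
    simp only [hg, Fin.mk.injEq] at this
    have b1 := hbound (N1 + i1 + j)
    have b2 := hbound (N1 + i2 + j)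
    omega
  -- propagate by strong induction
  have hprop : ∀ t, d (N1 + i1 + t) = d (N1 + i2 + t) := by
    intro t
    induction t using Nat.strong_induction_on with
    | _ t ih =>
      rcases lt_or_ge t D with ht | ht
      · exact hwin t ht
      · have h1 := hdet (N1 + i1 + t) (by omega)
        have h2 := hdet (N1 + i2 + t) (by omega)
        have hsum : ∑ j ∈ Finset.range D, Q.coeff (j + 1) * (d (N1 + i1 + t - (j + 1)) : ℝ)
            = ∑ j ∈ Finset.range D, Q.coeff (j + 1) * (d (N1 + i2 + t - (j + 1)) : ℝ) := by
          apply Finset.sum_congr rfl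
          intro j hj
          rw [Finset.mem_range] at hj
          have e1 : N1 + i1 + t - (j + 1) = N1 + i1 + (t - (j + 1)) := by omega
          have e2 : N1 + i2 + t - (j + 1) = N1 + i2 + (t - (j + 1)) := by omega
          rw [e1, e2, ih (t - (j + 1)) (by omega)]
        have : (d (N1 + i1 + t) : ℝ) = (d (N1 + i2 + t) : ℝ) := by rw [h1, h2, hsum]
        exact_mod_cast this
  refine ⟨N1 + i1, i2 - i1, by omega, ?_⟩
  intro m hm
  have h1 := hprop (m - (N1 + i1) + (i2 - i1))
  have h2 := hprop (m - (N1 + i1))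
  have e1 : N1 + i1 + (m - (N1 + i1) + (i2 - i1)) = m + (i2 - i1) := by omega
  have e2 : N1 + i2 + (m - (N1 + i1) + (i2 - i1)) = m + (i2 - i1) + (i2 - i1) := by omega
  have e3 : N1 + i1 + (m - (N1 + i1)) = m := by omega
  have e4 : N1 + i2 + (m - (N1 + i1)) = m + (i2 - i1) := by omega
  rw [e1, e2] at h1
  rw [e3, e4] at h2
  simp only [hd] at h1 h2 ⊢
  omega
lemma rat_of_d_periodic (k : ℕ) (hk : 2 ≤ k) (θ : ℝ) (M T : ℕ) (hT : 1 ≤ T)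
    (hper : ∀ m ≥ M,
      ⌈θ * (k:ℝ) ^ (m + T + 1)⌉ - k * ⌈θ * (k:ℝ) ^ (m + T)⌉
        = ⌈θ * (k:ℝ) ^ (m + 1)⌉ - k * ⌈θ * (k:ℝ) ^ m⌉) :
    ∃ q : ℚ, θ = q := by
  set a : ℕ → ℤ := fun m => ⌈θ * (k:ℝ) ^ m⌉ with ha
  set d : ℕ → ℤ := fun m => a (m + 1) - k * a m with hd
  have hstep : ∀ n, a (n + 1) = k * a n + d n := by intro n; simp only [hd]; ring
  have hperd : ∀ m ≥ M, d (m + T) = d m := by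
    intro m hm
    have := hper m hm
    simp only [hd, ha]
    have e1 : m + T + 1 = m + 1 + T := by ring
    omega
  -- telescoping
  have htel : ∀ n t, a (n + t) = (k:ℤ) ^ t * a n
      + ∑ j ∈ Finset.range t, (k:ℤ) ^ (t - 1 - j) * d (n + j) := by
    intro n t
    induction t with
    | zero => simp
    | succ t ih =>
      have e0 : n + (t + 1) = (n + t) + 1 := by ring
      rw [e0, hstep (n + t), ih, Finset.sum_range_succ]
      have e1 : ∀ j ∈ Finset.range t,
          (k:ℤ) ^ (t + 1 - 1 - j) * d (n + j) = k * ((k:ℤ) ^ (t - 1 - j) * d (n + j)) := by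
        intro j hj
        rw [Finset.mem_range] at hj
        have : t + 1 - 1 - j = (t - 1 - j) + 1 := by omega
        rw [this, pow_succ]
        ring
      rw [Finset.sum_congr rfl e1, ← Finset.mul_sum]
      have e2 : t + 1 - 1 - t = 0 := by omega
      rw [e2]
      rw [pow_succ]
      ring
  set S : ℕ → ℤ := fun m => ∑ j ∈ Finset.range T, (k:ℤ) ^ (T - 1 - j) * d (m + j) with hS
  have hSper : ∀ m ≥ M, S (m + T) = S m := by
    intro m hm
    apply Finset.sum_congr rfl
    intro j _
    have e1 : m + T + j = m + j + T := by ring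
    rw [e1, hperd (m + j) (by omega)]
  have hSprog : ∀ j, S (M + j * T) = S M := by
    intro j
    induction j with
    | zero => simp
    | succ j ih =>
      have e1 : M + (j + 1) * T = (M + j * T) + T := by ring
      rw [e1, hSper (M + j * T) (by omega), ih]
  set K : ℤ := (k:ℤ) ^ T with hK
  have hK2 : 2 ≤ K := by
    calc (2:ℤ) ≤ (k:ℤ) := by exact_mod_cast hk
    _ = (k:ℤ) ^ 1 := (pow_one _).symm
    _ ≤ (k:ℤ) ^ T := pow_le_pow_right₀ (by omega) hT
  set u : ℕ → ℤ := fun j => a (M + j * T) with hu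
  have hustep : ∀ j, u (j + 1) = K * u j + S M := by
    intro j
    have e1 : M + (j + 1) * T = (M + j * T) + T := by ring
    simp only [hu]
    rw [e1, htel (M + j * T) T]
    have e2 : (∑ j1 ∈ Finset.range T, (k:ℤ) ^ (T - 1 - j1) * d (M + j * T + j1)) = S (M + j * T) := rfl
    rw [e2, hSprog j, hK]
  have hclosed : ∀ j, (K - 1) * u j = K ^ j * ((K - 1) * u 0 + S M) - S M := by
    intro j
    induction j with
    | zero => simp
    | succ j ih =>
      rw [hustep j, pow_succ]
      nlinarith [ih]
  -- real bounds
  have hceil : ∀ n, |(a n : ℝ) - θ * (k:ℝ) ^ n| ≤ 1 := by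
    intro n
    have c1 := Int.le_ceil (θ * (k:ℝ) ^ n)
    have c2 := Int.ceil_lt_add_one (θ * (k:ℝ) ^ n)
    rw [abs_le]
    constructor <;> simp only [ha] <;> [linarith; linarith]
  set C : ℝ := (K - 1 : ℤ) * θ * (k:ℝ) ^ M - ((K - 1) * u 0 + S M : ℤ) with hC
  have hpowid : ∀ j : ℕ, (k:ℝ) ^ (M + j * T) = (k:ℝ) ^ M * ((K:ℝ)) ^ j := by
    intro j
    rw [hK]
    push_cast
    have e1 : M + j * T = M + T * j := by ring
    rw [e1, pow_add, pow_mul]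
  have hbnd : ∀ j : ℕ, |((K:ℝ)) ^ j * C| ≤ (K:ℝ) - 1 + |(S M : ℝ)| := by
    intro j
    have hcf := hclosed j
    have hcfR : ((K:ℝ) - 1) * (u j : ℝ) = (K:ℝ) ^ j * (((K:ℝ) - 1) * (u 0 : ℝ) + (S M : ℝ)) - (S M : ℝ) := by
      exact_mod_cast hcf
    have key : (K:ℝ) ^ j * C = ((K:ℝ) - 1) * (θ * (k:ℝ) ^ (M + j * T) - (u j : ℝ)) - (S M : ℝ) := by
      rw [hC, hpowid j]
      push_cast
      push_cast at hcfR
      nlinarith [hcfR]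
    rw [key]
    have h1 := hceil (M + j * T)
    have hKR : (1:ℝ) ≤ (K:ℝ) - 1 := by
      have : (2:ℝ) ≤ (K:ℝ) := by exact_mod_cast hK2
      linarith
    calc |((K:ℝ) - 1) * (θ * (k:ℝ) ^ (M + j * T) - (u j : ℝ)) - (S M : ℝ)|
        ≤ |((K:ℝ) - 1) * (θ * (k:ℝ) ^ (M + j * T) - (u j : ℝ))| + |(S M : ℝ)| := abs_sub _ _
      _ ≤ ((K:ℝ) - 1) * 1 + |(S M : ℝ)| := by
          rw [abs_mul, abs_of_pos (by linarith : (0:ℝ) < (K:ℝ) - 1)]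
          have h2 : |θ * (k:ℝ) ^ (M + j * T) - (u j : ℝ)| ≤ 1 := by
            rw [abs_sub_comm]; simpa only [hu] using h1
          nlinarith [h2]
      _ = (K:ℝ) - 1 + |(S M : ℝ)| := by ring
  have hC0 : C = 0 := by
    by_contra hC0
    have hCpos : 0 < |C| := abs_pos.mpr hC0
    have hK1R : (1:ℝ) < (K:ℝ) := by
      have : (2:ℝ) ≤ (K:ℝ) := by exact_mod_cast hK2
      linarith
    obtain ⟨j, hj⟩ := pow_unbounded_of_one_lt (((K:ℝ) - 1 + |(S M : ℝ)|) / |C|) hK1R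
    have := hbnd j
    rw [abs_mul, abs_of_pos (by positivity : (0:ℝ) < (K:ℝ) ^ j)] at this
    have h2 : ((K:ℝ) - 1 + |(S M : ℝ)|) / |C| < (K:ℝ) ^ j := hj
    rw [div_lt_iff₀ hCpos] at h2
    nlinarith [this, h2]
  -- conclude rationality
  have hKR : (2:ℝ) ≤ (K:ℝ) := by exact_mod_cast hK2
  have hkM : (0:ℝ) < (k:ℝ) ^ M := by positivity
  refine ⟨(((K - 1) * u 0 + S M : ℤ) : ℚ) / (((K - 1) * (k:ℤ) ^ M : ℤ) : ℚ), ?_⟩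
  rw [hC] at hC0
  have hden : (((K - 1) * (k:ℤ) ^ M : ℤ) : ℚ) ≠ 0 := by
    have h1 : (0:ℤ) < (K - 1) * (k:ℤ) ^ M :=
      mul_pos (by omega : (0:ℤ) < K - 1) (by positivity : (0:ℤ) < (k:ℤ) ^ M)
    exact_mod_cast h1.ne'
  rw [Rat.cast_div]
  push_cast
  push_cast at hC0
  have hne : ((K:ℝ) - 1) * (k:ℝ) ^ M ≠ 0 := by nlinarith [hkM]
  field_simp [show (K:ℝ) - 1 ≠ 0 by linarith]
  linarith [hC0]
lemma sum_floor_eq (k : ℕ) (hk : 2 ≤ k) (α : ℝ) (m : ℕ) (hm : 1 ≤ m) :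
    (∑ n ∈ Finset.Ico (k ^ (m - 1)) (k ^ m), ⌊α + Real.logb k ((n : ℝ) + 1)⌋)
      = (⌊α⌋ + m - 1) * ((k:ℤ) ^ m - (k:ℤ) ^ (m - 1))
        + ((k:ℤ) ^ m + 1 - ⌈(k:ℝ) ^ ((⌊α⌋ : ℝ) - α) * (k:ℝ) ^ m⌉) := by
  have hk1 : (1:ℝ) < (k:ℝ) := by exact_mod_cast hk.trans_lt' one_lt_two
  have hkpos : (0:ℝ) < (k:ℝ) := by linarith
  set A : ℤ := ⌊α⌋ with hA
  set θ : ℝ := (k:ℝ) ^ ((A : ℝ) - α) with hθ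
  have hθpos : 0 < θ := Real.rpow_pos_of_pos hkpos _
  have hθle : θ ≤ 1 := by
    apply Real.rpow_le_one_of_one_le_of_nonpos hk1.le
    have := Int.floor_le α
    simp only [hA]; linarith
  have hθgt : (k:ℝ)⁻¹ < θ := by
    have h1 : (k:ℝ) ^ (-1 : ℝ) < (k:ℝ) ^ ((A:ℝ) - α) := by
      apply Real.rpow_lt_rpow_left_iff hk1 |>.mpr
      have := Int.lt_floor_add_one α
      simp only [hA]; push_cast at this ⊢; linarith
    rwa [Real.rpow_neg_one] at h1
  have hkm_pos : (0:ℝ) < (k:ℝ) ^ m := by positivity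
  have hpow_split : (k:ℝ) ^ m = (k:ℝ) ^ (m - 1) * k := by
    rw [← pow_succ]; congr 1; omega
  set c : ℤ := ⌈θ * (k:ℝ) ^ m⌉ with hc
  have F1 : ((k ^ (m - 1) : ℕ) : ℤ) < c := by
    rw [hc, Int.lt_ceil]
    push_cast
    rw [hpow_split]
    have hid : (k:ℝ)⁻¹ * ((k:ℝ) ^ (m-1) * (k:ℝ)) = (k:ℝ) ^ (m-1) := by field_simp
    linarith [mul_lt_mul_of_pos_right hθgt
      (mul_pos (by positivity : (0:ℝ) < (k:ℝ) ^ (m-1)) hkpos), hid]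
  have F2 : c ≤ ((k ^ m : ℕ) : ℤ) := by
    rw [hc, Int.ceil_le]
    push_cast
    nlinarith [mul_le_mul_of_nonneg_right hθle hkm_pos.le]
  have hcpos : 0 < c := lt_of_le_of_lt (by positivity) F1
  set cn : ℕ := c.toNat with hcn
  have hcnc : (cn : ℤ) = c := Int.toNat_of_nonneg hcpos.le
  have hb1 : k ^ (m - 1) < cn := by exact_mod_cast F1.trans_eq hcnc.symm
  have hb2 : cn ≤ k ^ m := by exact_mod_cast hcnc.trans_le F2
  -- rpow identities
  have hrpow_m : (k:ℝ) ^ ((m:ℕ) : ℝ) = (k:ℝ) ^ m := Real.rpow_natCast _ _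
  have hrpow_m1 : (k:ℝ) ^ (((m:ℝ)) - 1) = (k:ℝ) ^ (m - 1) := by
    rw [← Real.rpow_natCast (k:ℝ) (m-1)]
    congr 1
    push_cast [Nat.cast_sub hm]
    ring
  have hrpow_theta : (k:ℝ) ^ ((m:ℝ) + (A:ℝ) - α) = θ * (k:ℝ) ^ m := by
    rw [show (m:ℝ) + (A:ℝ) - α = ((A:ℝ) - α) + (m:ℝ) by ring, Real.rpow_add hkpos, hrpow_m, hθ]
  -- per-element floors
  have floor1 : ∀ n ∈ Finset.Ico (k ^ (m - 1)) (cn - 1), ⌊α + Real.logb k ((n : ℝ) + 1)⌋ = A + m - 1 := by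
    intro n hn
    rw [Finset.mem_Ico] at hn
    have hnpos : (0:ℝ) < (n:ℝ) + 1 := by positivity
    rw [Int.floor_eq_iff]
    constructor
    · push_cast
      have hlog : ((m:ℝ) - 1) ≤ Real.logb k ((n:ℝ) + 1) := by
        rw [Real.le_logb_iff_rpow_le hk1 hnpos, hrpow_m1]
        have h2 : ((k ^ (m-1) : ℕ) : ℝ) ≤ (n:ℝ) := by exact_mod_cast hn.1
        push_cast at h2
        linarith
      have := Int.floor_le α
      simp only [hA] at this ⊢
      linarith
    · push_cast
      have hlt : ((n:ℝ) + 1) < θ * (k:ℝ) ^ m := by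
        have h1 : (n:ℤ) + 1 < c := by omega
        rw [hc, Int.lt_ceil] at h1
        push_cast at h1
        linarith
      have hlog : Real.logb k ((n:ℝ) + 1) < (m:ℝ) + (A:ℝ) - α := by
        rw [Real.logb_lt_iff_lt_rpow hk1 hnpos, hrpow_theta]
        exact hlt
      linarith
  have floor2 : ∀ n ∈ Finset.Ico (cn - 1) (k ^ m), ⌊α + Real.logb k ((n : ℝ) + 1)⌋ = A + m := by
    intro n hn
    rw [Finset.mem_Ico] at hn
    have hnpos : (0:ℝ) < (n:ℝ) + 1 := by positivity
    rw [Int.floor_eq_iff]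
    constructor
    · push_cast
      have hge : θ * (k:ℝ) ^ m ≤ (n:ℝ) + 1 := by
        have h1 : c ≤ (n:ℤ) + 1 := by omega
        rw [hc, Int.ceil_le] at h1
        push_cast at h1
        linarith
      have hlog : (m:ℝ) + (A:ℝ) - α ≤ Real.logb k ((n:ℝ) + 1) := by
        rw [Real.le_logb_iff_rpow_le hk1 hnpos, hrpow_theta]
        exact hge
      linarith
    · push_cast
      have hlog : Real.logb k ((n:ℝ) + 1) ≤ (m:ℝ) := by
        rw [Real.logb_le_iff_le_rpow hk1 hnpos, hrpow_m]
        have h3 : ((n + 1 : ℕ) : ℝ) ≤ ((k ^ m : ℕ) : ℝ) := by exact_mod_cast (by omega : n + 1 ≤ k ^ m)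
        push_cast at h3
        linarith
      have := Int.lt_floor_add_one α
      simp only [hA] at this ⊢
      linarith
  -- split the sum
  have hsplit1 : k ^ (m - 1) ≤ cn - 1 := by omega
  have hsplit2 : cn - 1 ≤ k ^ m := by omega
  rw [← Finset.sum_Ico_consecutive _ hsplit1 hsplit2]
  rw [Finset.sum_congr rfl floor1, Finset.sum_congr rfl floor2]
  rw [Finset.sum_const, Finset.sum_const, Nat.card_Ico, Nat.card_Ico]
  have e1 : ((cn - 1 - k ^ (m - 1) : ℕ) : ℤ) = c - 1 - (k ^ (m-1) : ℕ) := by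
    push_cast [Nat.cast_sub hsplit1, Nat.cast_sub (by omega : 1 ≤ cn)]
    omega
  have e2 : ((k ^ m - (cn - 1) : ℕ) : ℤ) = (k ^ m : ℕ) - (c - 1) := by
    push_cast [Nat.cast_sub hsplit2, Nat.cast_sub (by omega : 1 ≤ cn)]
    omega
  rw [nsmul_eq_mul, nsmul_eq_mul, e1, e2]
  push_cast
  ring
lemma RecR.add {u v : ℕ → ℝ} (hu : RecR u) (hv : RecR v) : RecR (fun m => u m + v m) := by
  have h1 : RecR (fun m => (0:ℝ) - v m) := RecR.sub (recR_finsupp (fun _ => 0) 0 (fun _ _ => rfl)) hv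
  have h2 := RecR.sub hu h1
  have h3 : (fun m => u m - (0 - v m)) = fun m => u m + v m := by funext m; ring
  rwa [h3] at h2

lemma RecR.congr {u v : ℕ → ℝ} (hu : RecR u) (h : ∀ m, u m = v m) : RecR v := by
  have : u = v := funext h
  rwa [this] at hu

theorem stmt11 (k : ℕ) (hk : 2 ≤ k) (α : ℝ) (b : ℕ → ℤ)
    (hb0 : b 0 = ⌊α⌋)
    (hb : ∀ m ≥ 1, b m = ∑ n ∈ Finset.Ico (k ^ (m - 1)) (k ^ m),
        ⌊α + Real.logb k ((n : ℝ) + 1)⌋) :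
    (∃ P Q : Polynomial ℝ, Q.coeff 0 ≠ 0 ∧
        (PowerSeries.mk fun m => ((b m : ℝ))) * (Q : PowerSeries ℝ) = (P : PowerSeries ℝ)) ↔
      ∃ q : ℚ, (k : ℝ) ^ α = (q : ℝ) := by
  rw [recR_iff]
  have hk1R : (1:ℝ) < (k:ℝ) := by exact_mod_cast hk.trans_lt' one_lt_two
  have hkpos : (0:ℝ) < (k:ℝ) := by linarith
  set A : ℤ := ⌊α⌋ with hA
  set θ : ℝ := (k:ℝ) ^ ((A : ℝ) - α) with hθ
  have hθpos : 0 < θ := Real.rpow_pos_of_pos hkpos _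
  set v : ℕ → ℝ := fun m => (⌈θ * (k:ℝ) ^ m⌉ : ℝ) with hv
  set β : ℝ := 1 - (k:ℝ)⁻¹ with hβ
  have hG1 := recR_geom (1:ℝ) 1
  have hG2 := recR_geom (((A:ℝ) - 1) * β + 1) (k:ℝ)
  have hG3 := recR_mgeom β (k:ℝ)
  have hGrec := RecR.add (RecR.add hG1 hG2) hG3
  set G : ℕ → ℝ := fun m =>
      (1 * 1 ^ m + (((A:ℝ) - 1) * β + 1) * (k:ℝ) ^ m) + β * (m:ℝ) * (k:ℝ) ^ m with hGdef
  -- b m = G m - v m for m ≥ 1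
  have hbval : ∀ m, 1 ≤ m → (b m : ℝ) = G m - v m := by
    intro m hm
    have h1 := hb m hm
    have h2 := sum_floor_eq k hk α m hm
    rw [← hA] at h2
    rw [← hθ] at h2
    rw [h2] at h1
    have hpow1 : (k:ℝ) ^ (m - 1) * (k:ℝ) = (k:ℝ) ^ m := by
      rw [← pow_succ]; congr 1; omega
    have hpow2 : (k:ℝ) ^ (m - 1) = (k:ℝ) ^ m * (k:ℝ)⁻¹ := by
      field_simp [← hpow1]
      exact hpow1
    rw [h1]
    push_cast
    rw [hpow2]
    simp only [hGdef, hv, hβ]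
    push_cast
    ring
  set w : ℕ → ℝ := fun m => (b m : ℝ) - G m + v m with hw
  have hwrec : RecR w := by
    apply recR_finsupp w 1
    intro m hm
    simp only [hw]
    rw [hbval m hm]
    ring
  have hbiff : RecR (fun m => (b m : ℝ)) ↔ RecR v := by
    constructor
    · intro hB
      exact (RecR.add hwrec (RecR.sub hGrec hB)).congr (fun m => by simp only [hw]; ring)
    · intro hV
      exact (RecR.add hwrec (RecR.sub hGrec hV)).congr (fun m => by simp only [hw]; ring)
  rw [hbiff]
  -- relate θ and k^α
  have hzθ : θ * (k:ℝ) ^ α = (k:ℝ) ^ (A:ℤ) := by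
    rw [hθ, ← Real.rpow_add hkpos]
    rw [← Real.rpow_intCast (k:ℝ) A]
    congr 1
    ring
  have hkapos : (0:ℝ) < (k:ℝ) ^ α := Real.rpow_pos_of_pos hkpos _
  constructor
  · intro hV
    obtain ⟨M, T, hT, hper⟩ := d_eventually_periodic k hk θ (by rw [hv] at hV; exact hV)
    obtain ⟨q, hq⟩ := rat_of_d_periodic k hk θ M T hT hper
    have hq0 : (q:ℝ) ≠ 0 := by rw [← hq]; exact hθpos.ne'
    have hq0' : q ≠ 0 := by exact_mod_cast hq0
    refine ⟨(k:ℚ) ^ (A:ℤ) / q, ?_⟩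
    push_cast
    rw [← hq]
    rw [eq_div_iff hθpos.ne', mul_comm]
    exact hzθ
  · rintro ⟨q, hq⟩
    have hq0 : (q:ℝ) ≠ 0 := by rw [← hq]; exact hkapos.ne'
    have hq0' : q ≠ 0 := by exact_mod_cast hq0
    have hθq : θ = (((k:ℚ) ^ (A:ℤ) / q : ℚ) : ℝ) := by
      push_cast
      rw [← hq]
      rw [eq_div_iff hkapos.ne']
      exact hzθ
    rw [hv]
    exact recR_ceil_of_rat k hk θ _ hθq
end

section
/- Let k ≥ 2 be an integer and α a real number with β = α − ⌊α⌋, and let b(m) = ∑_{n=k^(m−1)}^{k^m − 1} ⌊α + log_k(n+1)⌋ for m ≥ 1 and b(0) = ⌊α⌋. Then as formal power series, ∑_{m≥0} b(m) x^m = (1−x)(kx + ⌊α⌋(1−kx))/(1−kx)² + x/(1−x) + ∑_{m≥1} ⌊−k^(m−β)⌋ x^m. -/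
open Real Finset

lemma key12 (k : ℕ) (hk : 2 ≤ k) (α β : ℝ) (hβ : β = α - ⌊α⌋) (M : ℕ) :
    (∑ n ∈ Finset.Ico (k ^ M) (k ^ (M + 1)), ⌊α + Real.logb k ((n : ℝ) + 1)⌋)
      = (⌊α⌋ + (M : ℤ) + 1) * ((k : ℤ) ^ (M + 1) - (k : ℤ) ^ M)
        + ⌊-(k : ℝ) ^ ((M : ℝ) + 1 - β)⌋ + 1 + (k : ℤ) ^ M := by
  have hk1 : (1 : ℝ) < k := by
    have : (2 : ℝ) ≤ k := by exact_mod_cast hk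
    linarith
  have hk0 : (0 : ℝ) < k := by linarith
  have hβ0 : 0 ≤ β := by
    rw [hβ]; exact sub_nonneg.mpr (Int.floor_le α)
  have hβ1 : β < 1 := by
    rw [hβ]; have := Int.lt_floor_add_one α; linarith
  set X : ℝ := (k : ℝ) ^ ((M : ℝ) + 1 - β) with hX
  have hXpos : 0 < X := Real.rpow_pos_of_pos hk0 _
  have hXlow : ((k : ℝ) ^ M : ℝ) < X := by
    rw [hX, ← Real.rpow_natCast (k : ℝ) M]
    exact (Real.rpow_lt_rpow_left_iff hk1).mpr (by push_cast; linarith)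
  have hXhigh : X ≤ ((k : ℝ) ^ (M + 1) : ℝ) := by
    rw [hX, ← Real.rpow_natCast (k : ℝ) (M + 1)]
    exact (Real.rpow_le_rpow_left_iff hk1).mpr (by push_cast; linarith)
  have hceil_low : ((k : ℤ) ^ M) < ⌈X⌉ := by
    rw [Int.lt_ceil]; push_cast; exact hXlow
  have hceil_high : ⌈X⌉ ≤ (k : ℤ) ^ (M + 1) := by
    rw [Int.ceil_le]; push_cast; exact hXhigh
  have hkM1 : (1 : ℤ) ≤ (k : ℤ) ^ M := one_le_pow₀ (by exact_mod_cast hk.trans' one_le_two)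
  set N : ℕ := (⌈X⌉ - 1).toNat with hNdef
  have hNcast : (N : ℤ) = ⌈X⌉ - 1 := Int.toNat_of_nonneg (by omega)
  have hNlow : k ^ M ≤ N := by
    have : ((k ^ M : ℕ) : ℤ) ≤ (N : ℤ) := by push_cast [hNcast]; omega
    exact_mod_cast this
  have hNhigh : N ≤ k ^ (M + 1) := by
    have : ((N : ℤ)) ≤ ((k ^ (M + 1) : ℕ) : ℤ) := by push_cast [hNcast]; omega
    exact_mod_cast this
  -- floor values
  have hfloor1 : ∀ n ∈ Finset.Ico (k ^ M) N, ⌊α + Real.logb k ((n : ℝ) + 1)⌋ = ⌊α⌋ + M := by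
    intro n hn
    rw [Finset.mem_Ico] at hn
    have hn1pos : (0 : ℝ) < (n : ℝ) + 1 := by positivity
    have hlow : ((k : ℝ) ^ M) < (n : ℝ) + 1 := by
      have : ((k ^ M : ℕ) : ℝ) ≤ (n : ℝ) := by exact_mod_cast hn.1
      push_cast at this ⊢; linarith
    have hhigh : (n : ℝ) + 1 < X := by
      have h1 : (n : ℤ) + 1 ≤ ⌈X⌉ - 1 := by
        have : (n : ℤ) < (N : ℤ) := by exact_mod_cast hn.2
        omega
      have h2 : ((n : ℝ) + 1) ≤ (⌈X⌉ : ℝ) - 1 := by exact_mod_cast h1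
      have := Int.ceil_lt_add_one X
      linarith
    have harg : α + Real.logb k ((n : ℝ) + 1)
        = (⌊α⌋ : ℝ) + (β + Real.logb k ((n : ℝ) + 1)) := by rw [hβ]; ring
    rw [harg, Int.floor_intCast_add]
    have hfl : ⌊β + Real.logb k ((n : ℝ) + 1)⌋ = (M : ℤ) := by
      rw [Int.floor_eq_iff]
      constructor
      · have : (M : ℝ) < Real.logb k ((n : ℝ) + 1) := by
          rw [Real.lt_logb_iff_rpow_lt hk1 hn1pos, Real.rpow_natCast]
          exact hlow
        push_cast; linarith
      · have : Real.logb k ((n : ℝ) + 1) < (M : ℝ) + 1 - β := by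
          rw [Real.logb_lt_iff_lt_rpow hk1 hn1pos]
          exact hhigh
        push_cast; linarith
    rw [hfl]
  have hfloor2 : ∀ n ∈ Finset.Ico N (k ^ (M + 1)),
      ⌊α + Real.logb k ((n : ℝ) + 1)⌋ = ⌊α⌋ + M + 1 := by
    intro n hn
    rw [Finset.mem_Ico] at hn
    have hn1pos : (0 : ℝ) < (n : ℝ) + 1 := by positivity
    have hlow : X ≤ (n : ℝ) + 1 := by
      have h1 : ⌈X⌉ ≤ (n : ℤ) + 1 := by
        have : (N : ℤ) ≤ (n : ℤ) := by exact_mod_cast hn.1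
        omega
      have h2 : ((⌈X⌉ : ℝ)) ≤ (n : ℝ) + 1 := by exact_mod_cast h1
      have := Int.le_ceil X
      linarith
    have hhigh : (n : ℝ) + 1 ≤ (k : ℝ) ^ (M + 1) := by
      have : (n : ℕ) + 1 ≤ k ^ (M + 1) := hn.2
      exact_mod_cast this
    have harg : α + Real.logb k ((n : ℝ) + 1)
        = (⌊α⌋ : ℝ) + (β + Real.logb k ((n : ℝ) + 1)) := by rw [hβ]; ring
    rw [harg, Int.floor_intCast_add]
    have hfl : ⌊β + Real.logb k ((n : ℝ) + 1)⌋ = (M : ℤ) + 1 := by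
      rw [Int.floor_eq_iff]
      constructor
      · have : (M : ℝ) + 1 - β ≤ Real.logb k ((n : ℝ) + 1) := by
          rw [Real.le_logb_iff_rpow_le hk1 hn1pos]
          exact hlow
        push_cast; linarith
      · have : Real.logb k ((n : ℝ) + 1) ≤ (M : ℝ) + 1 := by
          rw [Real.logb_le_iff_le_rpow hk1 hn1pos,
            show ((M : ℝ) + 1) = ((M + 1 : ℕ) : ℝ) by push_cast; ring, Real.rpow_natCast]
          exact hhigh
        push_cast; linarith
    rw [hfl]; ring
  rw [← Finset.sum_Ico_consecutive _ hNlow hNhigh,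
    Finset.sum_congr rfl hfloor1, Finset.sum_congr rfl hfloor2,
    Finset.sum_const, Finset.sum_const, Nat.card_Ico, Nat.card_Ico,
    Int.floor_neg, nsmul_eq_mul, nsmul_eq_mul,
    Nat.cast_sub hNlow, Nat.cast_sub hNhigh, hNcast]
  push_cast
  ring

theorem stmt12 (k : ℕ) (hk : 2 ≤ k) (α β : ℝ) (hβ : β = α - ⌊α⌋) (b : ℕ → ℤ)
    (hb0 : b 0 = ⌊α⌋)
    (hb : ∀ m ≥ 1, b m = ∑ n ∈ Finset.Ico (k ^ (m - 1)) (k ^ m),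
        ⌊α + Real.logb k ((n : ℝ) + 1)⌋) :
    ∀ x : ℝ, |x| < 1 / (k : ℝ) →
      ∑' m : ℕ, (b m : ℝ) * x ^ m =
        (1 - x) * ((k : ℝ) * x + (⌊α⌋ : ℝ) * (1 - (k : ℝ) * x)) / (1 - (k : ℝ) * x) ^ 2 +
          x / (1 - x) +
          ∑' m : ℕ, ((⌊-(k : ℝ) ^ ((m : ℝ) + 1 - β)⌋ : ℝ)) * x ^ (m + 1) := by
  intro x hx
  have hk1 : (1 : ℝ) < k := by
    have : (2 : ℝ) ≤ k := by exact_mod_cast hk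
    linarith
  have hk0 : (0 : ℝ) < k := by linarith
  have hβ0 : 0 ≤ β := by rw [hβ]; exact sub_nonneg.mpr (Int.floor_le α)
  have hxk : ‖(k : ℝ) * x‖ < 1 := by
    rw [Real.norm_eq_abs, abs_mul, abs_of_pos hk0]
    calc (k : ℝ) * |x| < (k : ℝ) * (1 / k) := by
          exact mul_lt_mul_of_pos_left hx hk0
      _ = 1 := by field_simp
  have hx1 : ‖x‖ < 1 := by
    rw [Real.norm_eq_abs]
    calc |x| < 1 / (k : ℝ) := hx
      _ ≤ 1 := by rw [div_le_one hk0]; linarith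
  have h1x : (1 : ℝ) - x ≠ 0 := by
    have := abs_lt.mp hx1
    intro h; rw [Real.norm_eq_abs] at hx1; have := abs_lt.mp hx1; linarith [this.2]
  have hkx1 : (1 : ℝ) - (k : ℝ) * x ≠ 0 := by
    rw [Real.norm_eq_abs] at hxk
    have := abs_lt.mp hxk
    intro h; linarith [this.2]
  -- basic HasSums
  have HA : HasSum (fun m : ℕ => ((k : ℝ) * x) ^ m) (1 - (k : ℝ) * x)⁻¹ :=
    hasSum_geometric_of_norm_lt_one hxk
  have HB : HasSum (fun m : ℕ => (m : ℝ) * ((k : ℝ) * x) ^ m)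
      (((k : ℝ) * x) / (1 - (k : ℝ) * x) ^ 2) :=
    hasSum_coe_mul_geometric_of_norm_lt_one hxk
  have HC : HasSum (fun m : ℕ => x ^ m) (1 - x)⁻¹ := hasSum_geometric_of_norm_lt_one hx1
  -- the floor-rpow series
  set E : ℕ → ℝ := fun m => ((⌊-(k : ℝ) ^ ((m : ℝ) + 1 - β)⌋ : ℤ) : ℝ) * x ^ (m + 1) with hE
  have sE : Summable E := by
    apply Summable.of_norm_bounded
      (g := fun m => ((k : ℝ) * |x|) ^ (m + 1) + |x| ^ (m + 1))
    · apply Summable.add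
      · have : Summable (fun m : ℕ => ((k : ℝ) * |x|) ^ m) := by
          apply summable_geometric_of_norm_lt_one
          rwa [Real.norm_eq_abs, abs_of_nonneg (by positivity), ← abs_of_pos hk0, ← abs_mul]
        simpa [pow_succ] using this.mul_right ((k : ℝ) * |x|)
      · have : Summable (fun m : ℕ => |x| ^ m) := by
          apply summable_geometric_of_norm_lt_one
          rwa [Real.norm_eq_abs, abs_abs, ← Real.norm_eq_abs]
        simpa [pow_succ] using this.mul_right |x|
    · intro m
      rw [hE]
      have hXpos : (0 : ℝ) < (k : ℝ) ^ ((m : ℝ) + 1 - β) := Real.rpow_pos_of_pos hk0 _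
      have hfb : |((⌊-(k : ℝ) ^ ((m : ℝ) + 1 - β)⌋ : ℤ) : ℝ)|
          ≤ (k : ℝ) ^ ((m : ℝ) + 1 - β) + 1 := by
        have h1 : ((⌊-(k : ℝ) ^ ((m : ℝ) + 1 - β)⌋ : ℤ) : ℝ)
            ≤ -(k : ℝ) ^ ((m : ℝ) + 1 - β) := Int.floor_le _
        have h2 : -(k : ℝ) ^ ((m : ℝ) + 1 - β) - 1
            < ((⌊-(k : ℝ) ^ ((m : ℝ) + 1 - β)⌋ : ℤ) : ℝ) := Int.sub_one_lt_floor _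
        rw [abs_le]; constructor <;> linarith
      have hXle : (k : ℝ) ^ ((m : ℝ) + 1 - β) ≤ (k : ℝ) ^ (m + 1 : ℕ) := by
        rw [← Real.rpow_natCast (k : ℝ) (m + 1)]
        apply (Real.rpow_le_rpow_left_iff hk1).mpr
        push_cast; linarith
      calc ‖((⌊-(k : ℝ) ^ ((m : ℝ) + 1 - β)⌋ : ℤ) : ℝ) * x ^ (m + 1)‖
          = |((⌊-(k : ℝ) ^ ((m : ℝ) + 1 - β)⌋ : ℤ) : ℝ)| * |x| ^ (m + 1) := by
            rw [Real.norm_eq_abs, abs_mul, abs_pow]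
        _ ≤ ((k : ℝ) ^ (m + 1 : ℕ) + 1) * |x| ^ (m + 1) := by
            apply mul_le_mul_of_nonneg_right _ (by positivity)
            linarith
        _ = ((k : ℝ) * |x|) ^ (m + 1) + |x| ^ (m + 1) := by rw [mul_pow]; ring
  have HE : HasSum E (∑' m, E m) := sE.hasSum
  -- the shifted series, decomposed
  set c1 : ℝ := (⌊α⌋ : ℝ) * ((k : ℝ) - 1) * x with hc1
  set c2 : ℝ := ((k : ℝ) - 1) * x with hc2
  have HF : HasSum
      (fun m : ℕ => c1 * ((k : ℝ) * x) ^ m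
        + c2 * ((m : ℝ) * ((k : ℝ) * x) ^ m + ((k : ℝ) * x) ^ m)
        + x * x ^ m + x * ((k : ℝ) * x) ^ m + E m)
      (c1 * (1 - (k : ℝ) * x)⁻¹
        + c2 * (((k : ℝ) * x) / (1 - (k : ℝ) * x) ^ 2 + (1 - (k : ℝ) * x)⁻¹)
        + x * (1 - x)⁻¹ + x * (1 - (k : ℝ) * x)⁻¹ + ∑' m, E m) :=
    ((((HA.mul_left c1).add ((HB.add HA).mul_left c2)).add (HC.mul_left x)).add
      (HA.mul_left x)).add HE
  have hFeq : ∀ m : ℕ, (b (m + 1) : ℝ) * x ^ (m + 1)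
      = c1 * ((k : ℝ) * x) ^ m
        + c2 * ((m : ℝ) * ((k : ℝ) * x) ^ m + ((k : ℝ) * x) ^ m)
        + x * x ^ m + x * ((k : ℝ) * x) ^ m + E m := by
    intro m
    have h1 : b (m + 1) = ∑ n ∈ Finset.Ico (k ^ m) (k ^ (m + 1)),
        ⌊α + Real.logb k ((n : ℝ) + 1)⌋ := by
      simpa using hb (m + 1) (Nat.le_add_left 1 m)
    rw [h1, key12 k hk α β hβ m, hE]
    push_cast
    ring
  have HF' : HasSum (fun m : ℕ => (b (m + 1) : ℝ) * x ^ (m + 1))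
      (c1 * (1 - (k : ℝ) * x)⁻¹
        + c2 * (((k : ℝ) * x) / (1 - (k : ℝ) * x) ^ 2 + (1 - (k : ℝ) * x)⁻¹)
        + x * (1 - x)⁻¹ + x * (1 - (k : ℝ) * x)⁻¹ + ∑' m, E m) := by
    convert HF using 1
    exact funext hFeq
  have sb : Summable (fun m : ℕ => (b m : ℝ) * x ^ m) := by
    rw [← summable_nat_add_iff 1]
    exact HF'.summable
  rw [Summable.tsum_eq_zero_add sb, HF'.tsum_eq, hb0]
  rw [hE]
  simp only [pow_zero, mul_one]
  rw [hc1, hc2]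
  have hEeq : (∑' (m : ℕ), ((⌊-(k : ℝ) ^ ((m : ℝ) + 1 - β)⌋ : ℤ) : ℝ) * x ^ (m + 1))
      = ∑' (m : ℕ), ((⌊-(k : ℝ) ^ ((m : ℝ) + 1 - β)⌋ : ℤ) : ℝ) * x ^ (m + 1) := rfl
  field_simp
  ring
end

section
/- If k ≥ 2 is an integer and k^α is rational for a real number α, then the sequence {⌊α + log_k(n+1)⌋}_{n≥0} is k-regular. -/
noncomputable def fseq (k : ℕ) (α : ℝ) : ℕ → ℤ := fun N => ⌊α + Real.logb k N⌋

open Classical in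
noncomputable def Gseq (k p qq d : ℕ) : ℕ → ℤ := fun n =>
  if ∃ m : ℕ, p*n + d < qq * k^m ∧ qq * k^m ≤ p*n + p then 1 else 0

def dseq (m : ℕ) : ℕ → ℤ := fun n => if n = m then 1 else 0

lemma fchar {k p qq : ℕ} {α : ℝ} (hk : 2 ≤ k) (hp : 0 < p) (hq : 0 < qq)
    (hpq : (k:ℝ)^α = p/qq) {N : ℕ} (hN : 0 < N) (m : ℤ) :
    fseq k α N = m ↔ ((qq:ℝ) * (k:ℝ)^m ≤ N*p ∧ (N:ℝ)*p < qq*(k:ℝ)^(m+1)) := by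
  have hk1 : (1:ℝ) < k := by exact_mod_cast hk.trans_lt' one_lt_two
  have hk0 : (0:ℝ) < k := lt_trans one_pos hk1
  have hNR : (0:ℝ) < N := by exact_mod_cast hN
  have hqR : (0:ℝ) < qq := by exact_mod_cast hq
  have key : (k:ℝ) ^ (α + Real.logb k N) = N * p / qq := by
    rw [Real.rpow_add hk0, hpq, Real.rpow_logb hk0 (ne_of_gt hk1) hNR]
    ring
  have h1 : ((m:ℝ) ≤ α + Real.logb k N) ↔ (qq:ℝ)*(k:ℝ)^m ≤ (N:ℝ)*p := by
    rw [← Real.rpow_le_rpow_left_iff hk1 (y := (m:ℝ)), key, ← Real.rpow_intCast,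
      le_div_iff₀ hqR]
    constructor <;> intro h <;> linarith
  have h2 : (α + Real.logb k N < (m:ℝ)+1) ↔ (N:ℝ)*p < qq*(k:ℝ)^(m+1) := by
    rw [← Real.rpow_lt_rpow_left_iff hk1 (z := (m:ℝ)+1), key, div_lt_iff₀ hqR]
    have : (k:ℝ) ^ ((m:ℝ)+1) = (k:ℝ)^(m+1:ℤ) := by
      rw [← Real.rpow_intCast]; norm_num
    rw [this]
    constructor <;> intro h <;> linarith
  rw [fseq, Int.floor_eq_iff, h1, h2]

lemma fmono {k : ℕ} {α : ℝ} (hk : 2 ≤ k) {N M : ℕ} (hN : 0 < N) (h : N ≤ M) :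
    fseq k α N ≤ fseq k α M := by
  have hk1 : (1:ℝ) < k := by exact_mod_cast hk.trans_lt' one_lt_two
  apply Int.floor_le_floor
  have := Real.logb_le_logb_of_le hk1 (x := (N:ℝ)) (y := (M:ℝ))
    (by exact_mod_cast hN) (Nat.cast_le.mpr h)
  linarith

lemma fshift {k : ℕ} {α : ℝ} (hk : 2 ≤ k) (e : ℕ) {N : ℕ} (hN : 0 < N) :
    fseq k α (k ^ e * N) = fseq k α N + e := by
  have hk1 : (1:ℝ) < k := by exact_mod_cast hk.trans_lt' one_lt_two
  have hNR : (N:ℝ) ≠ 0 := by positivity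
  have hlog : Real.logb k ((k:ℝ)^e * N) = e + Real.logb k N := by
    rw [Real.logb_mul (by positivity) hNR, Real.logb_pow,
      Real.logb_self_eq_one hk1]
    ring
  rw [fseq]
  push_cast
  rw [hlog, show α + ((e:ℝ) + Real.logb k N) = (α + Real.logb k N) + ((e:ℤ):ℝ) by
    push_cast; ring, Int.floor_add_intCast]
  rfl

lemma fjump {k p qq : ℕ} {α : ℝ} (hk : 2 ≤ k) (hp : 0 < p) (hq : 0 < qq)
    (hpq : (k:ℝ)^α = p/qq) {A B : ℕ} (hA : 0 < A) (hAB : A ≤ B) :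
    fseq k α A < fseq k α B ↔
      ∃ m : ℤ, (A:ℝ)*p < qq*(k:ℝ)^m ∧ (qq:ℝ)*(k:ℝ)^m ≤ B*p := by
  have hk1 : (1:ℝ) < k := by exact_mod_cast hk.trans_lt' one_lt_two
  have hqR : (0:ℝ) < qq := by exact_mod_cast hq
  have hB : 0 < B := hA.trans_le hAB
  have cA := (fchar hk hp hq hpq hA (fseq k α A)).mp rfl
  have cB := (fchar hk hp hq hpq hB (fseq k α B)).mp rfl
  constructor
  · intro h
    refine ⟨fseq k α B, ?_, cB.1⟩
    have h2 : (k:ℝ)^(fseq k α A + 1) ≤ (k:ℝ)^(fseq k α B) :=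
      zpow_le_zpow_right₀ hk1.le (by omega)
    nlinarith [cA.2]
  · rintro ⟨m, h1, h2⟩
    have hAm : (k:ℝ)^(fseq k α A) < (k:ℝ)^m := by nlinarith [cA.1]
    have hBm : (k:ℝ)^m < (k:ℝ)^(fseq k α B + 1) := by nlinarith [cB.2]
    have := (zpow_lt_zpow_iff_right₀ hk1).mp hAm
    have := (zpow_lt_zpow_iff_right₀ hk1).mp hBm
    omega

lemma fjump1 {k : ℕ} {α : ℝ} (hk : 2 ≤ k) {A B : ℕ} (hA : 0 < A) (hBA : B ≤ k*A) :
    fseq k α B ≤ fseq k α A + 1 := by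
  rcases Nat.eq_zero_or_pos B with hB | hB
  · subst hB
    have hk1 : (1:ℝ) < k := by exact_mod_cast hk.trans_lt' one_lt_two
    have h0 : fseq k α 0 = ⌊α⌋ := by simp [fseq]
    have h1 : ⌊α⌋ ≤ fseq k α A := by
      apply Int.floor_le_floor
      have : 0 ≤ Real.logb k A := Real.logb_nonneg hk1 (by exact_mod_cast hA)
      linarith
    omega
  · calc fseq k α B ≤ fseq k α (k^1 * A) := fmono hk hB (by simpa using hBA)
    _ = fseq k α A + 1 := by simpa using fshift (α := α) hk 1 hA

lemma mainD {k p qq : ℕ} {α : ℝ} (hk : 2 ≤ k) (hp : 0 < p) (hq : 0 < qq)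
    (hpq : (k:ℝ)^α = p/qq) (e j : ℕ) (hj1 : 1 ≤ j) (hjk : j ≤ k^e)
    {n : ℕ} (hn : qq ≤ n) :
    fseq k α (k^e * n + j) = e + fseq k α (n+1) - Gseq k p qq (p*j/k^e) n := by
  have hk1 : (1:ℝ) < k := by exact_mod_cast hk.trans_lt' one_lt_two
  have hqR : (0:ℝ) < qq := by exact_mod_cast hq
  have hke : 0 < k^e := Nat.pow_pos (by omega)
  have hn1 : 0 < n := lt_of_lt_of_le hq hn
  set A := k^e * n + j with hAdef
  set B := k^e * (n+1) with hBdef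
  have hA : 0 < A := by positivity
  have hAB : A ≤ B := by simp only [hAdef, hBdef, Nat.mul_add, mul_one]; omega
  have hBkA : B ≤ k * A := by
    have h1 : 2*(k^e*n) ≤ k*(k^e*n) := Nat.mul_le_mul_right _ hk
    have h2 : k^e ≤ k^e*n := Nat.le_mul_of_pos_right _ hn1
    have h3 : k*(k^e*n) ≤ k*A := Nat.mul_le_mul_left _ (by omega)
    calc B = k^e*n + k^e := by rw [hBdef]; ring
      _ ≤ 2*(k^e*n) := by omega
      _ ≤ k*(k^e*n) := h1
      _ ≤ k*A := h3
  have hfB : fseq k α B = fseq k α (n+1) + e := fshift hk e (by omega)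
  obtain ⟨d, hddef⟩ : ∃ d, p*j/k^e = d := ⟨_, rfl⟩
  rw [hddef]
  have hd : k^e * d ≤ p * j := by
    rw [← hddef, mul_comm]; exact Nat.div_mul_le_self _ _
  have hd2 : p*j < k^e * d + k^e := by
    have h1 := Nat.div_add_mod (p*j) (k^e)
    rw [hddef] at h1
    have h2 := Nat.mod_lt (p*j) hke
    omega
  have hmono := fmono (α := α) hk hA hAB
  have hjmp1 := fjump1 (α := α) hk hA hBkA
  by_cases hG : ∃ m : ℕ, p*n + d < qq * k^m ∧ qq * k^m ≤ p*n + p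
  · obtain ⟨m, hm1, hm2⟩ := hG
    have natlower : A * p < qq * k^(m+e) := by
      calc A * p = k^e * n * p + j * p := by rw [hAdef]; ring
        _ < k^e * n * p + (k^e * d + k^e) := by
            have : j * p < k^e * d + k^e := by rw [mul_comm]; omega
            omega
        _ = (p*n + d + 1) * k^e := by ring
        _ ≤ (qq * k^m) * k^e := Nat.mul_le_mul_right _ (by omega)
        _ = qq * k^(m+e) := by rw [pow_add]; ring
    have natupper : qq * k^(m+e) ≤ B * p := by
      calc qq * k^(m+e) = (qq * k^m) * k^e := by rw [pow_add]; ring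
        _ ≤ (p*n + p) * k^e := Nat.mul_le_mul_right _ hm2
        _ = B * p := by rw [hBdef]; ring
    have hlt : fseq k α A < fseq k α B := by
      rw [fjump hk hp hq hpq hA hAB]
      refine ⟨((m+e : ℕ) : ℤ), ?_, ?_⟩
      · rw [zpow_natCast]; exact_mod_cast natlower
      · rw [zpow_natCast]; exact_mod_cast natupper
    have hGval : Gseq k p qq d n = 1 := by
      rw [Gseq, if_pos ⟨m, hm1, hm2⟩]
    rw [hGval]; omega
  · have hGval : Gseq k p qq d n = 0 := by rw [Gseq, if_neg hG]
    have hnotlt : ¬ (fseq k α A < fseq k α B) := by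
      intro h
      obtain ⟨m, h1, h2⟩ := (fjump hk hp hq hpq hA hAB).mp h
      have hem : (e : ℤ) < m := by
        have hnp : (qq : ℝ) * (k:ℝ)^(e:ℤ) ≤ A * p := by
          rw [zpow_natCast]
          have : qq * k^e ≤ A * p := by
            calc qq * k^e ≤ (n*p) * k^e :=
              Nat.mul_le_mul_right _ (le_trans hn (Nat.le_mul_of_pos_right _ hp))
              _ ≤ A * p := by rw [hAdef]; nlinarith
          exact_mod_cast this
        have : (k:ℝ)^(e:ℤ) < (k:ℝ)^m := by
          rw [← mul_lt_mul_iff_right₀ hqR]; linarith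
        exact (zpow_lt_zpow_iff_right₀ hk1).mp this
      set m' := (m - e).toNat with hm'def
      have hmm : m = ((e + m' : ℕ) : ℤ) := by push_cast; omega
      rw [hmm, zpow_natCast] at h1 h2
      have natlower : A * p < qq * k^(e+m') := by exact_mod_cast h1
      have natupper : qq * k^(e+m') ≤ B * p := by exact_mod_cast h2
      apply hG
      refine ⟨m', ?_, ?_⟩
      · by_contra hcon
        push_neg at hcon
        have : qq * k^(e+m') ≤ A * p := by
          calc qq * k^(e+m') = (qq * k^(m')) * k^e := by rw [pow_add]; ring
            _ ≤ (p*n + d) * k^e := Nat.mul_le_mul_right _ hcon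
            _ = p*n*k^e + k^e*d := by ring
            _ ≤ p*n*k^e + p*j := by have := hd; omega
            _ = A * p := by rw [hAdef]; ring
        exact absurd natlower (not_lt.mpr this)
      · have : qq * k^(e+m') = (qq * k^(m')) * k^e := by rw [pow_add]; ring
        rw [this] at natupper
        have hBp : B * p = ((n+1)*p) * k^e := by rw [hBdef]; ring
        rw [hBp] at natupper
        have h5 := Nat.le_of_mul_le_mul_right natupper hke
        calc qq * k^(m') ≤ (n+1)*p := h5
          _ = p*n + p := by ring
    have heq : fseq k α A = fseq k α B := le_antisymm hmono (not_lt.mp hnotlt)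
    rw [hGval]; omega

noncomputable def Tset (k p qq : ℕ) (α : ℝ) : Set (ℕ → ℤ) :=
  insert (fun n => fseq k α (n+1)) (insert 1
    (Gseq k p qq '' Set.Iic p ∪ dseq '' Set.Iio qq))

lemma Tfin (k p qq : ℕ) (α : ℝ) : (Tset k p qq α).Finite :=
  (((Set.finite_Iic p).image _).union ((Set.finite_Iio qq).image _)).insert _ |>.insert _

lemma spanmem {k p qq : ℕ} {α : ℝ} (hk : 2 ≤ k) (hp : 0 < p) (hq : 0 < qq)
    (hpq : (k:ℝ)^α = p/qq) (e i : ℕ) (hi : i < k^e) :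
    (fun n => fseq k α (k^e * n + (i+1))) ∈ Submodule.span ℤ (Tset k p qq α) := by
  have hke : 0 < k^e := Nat.pow_pos (by omega)
  set a' : ℕ → ℤ := fun n => fseq k α (n+1) with ha'
  set d := p*(i+1)/k^e with hddef
  have hdp : d ≤ p := by
    rw [hddef]
    calc p*(i+1)/k^e ≤ p*k^e/k^e := Nat.div_le_div_right (Nat.mul_le_mul_left _ hi)
      _ = p := Nat.mul_div_cancel _ hke
  set g : ℕ → ℤ := Gseq k p qq d with hg
  have key : (fun n => fseq k α (k^e * n + (i+1)))
      = (e:ℤ) • (1 : ℕ → ℤ) + a' - g + ∑ m ∈ Finset.range qq,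
          (fseq k α (k^e * m + (i+1)) - ((e:ℤ) + a' m - g m)) • dseq m := by
    funext n
    simp only [Pi.add_apply, Pi.sub_apply, Pi.smul_apply, Finset.sum_apply,
      smul_eq_mul, Pi.one_apply]
    rcases lt_or_ge n qq with h | h
    · rw [Finset.sum_eq_single n (fun m _ hm => by
        simp [dseq, (Ne.symm hm : ¬ n = m)]) (fun hn => absurd (Finset.mem_range.mpr h) hn)]
      simp [dseq]
    · have hz : ∀ m ∈ Finset.range qq,
          (fseq k α (k^e * m + (i+1)) - ((e:ℤ) + a' m - g m)) * dseq m n = 0 := by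
        intro m hm
        have : ¬ n = m := by have := Finset.mem_range.mp hm; omega
        simp [dseq, this]
      rw [Finset.sum_congr rfl hz, Finset.sum_const_zero]
      have hmd := mainD hk hp hq hpq e (i+1) (by omega) hi h
      rw [← hddef] at hmd
      have hgn : g n = Gseq k p qq d n := rfl
      have han : a' n = fseq k α (n+1) := rfl
      omega
  rw [key]
  refine Submodule.add_mem _ (Submodule.sub_mem _ (Submodule.add_mem _ ?_ ?_) ?_)
    (Submodule.sum_mem _ fun m hm => Submodule.smul_mem _ _ (Submodule.subset_span ?_))
  · exact Submodule.smul_mem _ _ (Submodule.subset_span (Or.inr (Or.inl rfl)))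
  · exact Submodule.subset_span (Or.inl rfl)
  · exact Submodule.subset_span (Or.inr (Or.inr (Or.inl ⟨d, hdp, rfl⟩)))
  · exact Or.inr (Or.inr (Or.inr ⟨m, Finset.mem_range.mp hm, rfl⟩))

/-- A sequence of integers is `k`-regular if the ℤ-module generated by the
subsequences `n ↦ a (k^e * n + i)` for `e ≥ 0`, `0 ≤ i < k^e` is finitely generated. -/
def IsKRegular (k : ℕ) (a : ℕ → ℤ) : Prop :=
  (Submodule.span ℤ
    {s : ℕ → ℤ | ∃ e i : ℕ, i < k ^ e ∧ s = fun n => a (k ^ e * n + i)}).FG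

theorem stmt13 (k : ℕ) (hk : 2 ≤ k) (α : ℝ)
    (hrat : ∃ q : ℚ, (k : ℝ) ^ α = (q : ℝ)) :
    IsKRegular k (fun n => ⌊α + Real.logb k ((n : ℝ) + 1)⌋) := by
  obtain ⟨q', hq'⟩ := hrat
  have hk0 : (0:ℝ) < k := by
    have : (0:ℕ) < k := by omega
    exact_mod_cast this
  have hq'pos : 0 < q' := by
    have : (0:ℝ) < q' := hq' ▸ Real.rpow_pos_of_pos hk0 α
    exact_mod_cast this
  set p := q'.num.toNat with hpdef
  set qq := q'.den with hqqdef
  have hnum : 0 < q'.num := Rat.num_pos.mpr hq'pos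
  have hp : 0 < p := by omega
  have hq : 0 < qq := q'.pos
  have hpq : (k:ℝ)^α = p/qq := by
    rw [hq', Rat.cast_def]
    congr 1
    exact_mod_cast (congrArg (Int.cast : ℤ → ℝ) (Int.toNat_of_nonneg hnum.le)).symm
  unfold IsKRegular
  have hsub : Submodule.span ℤ
      {s : ℕ → ℤ | ∃ e i : ℕ, i < k ^ e ∧
        s = fun n => (fun n : ℕ => ⌊α + Real.logb k ((n:ℝ) + 1)⌋) (k ^ e * n + i)}
      ≤ Submodule.span ℤ (Tset k p qq α) := by
    rw [Submodule.span_le]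
    rintro s ⟨e, i, hi, rfl⟩
    have heq : (fun n => (fun n : ℕ => ⌊α + Real.logb k ((n:ℝ) + 1)⌋) (k ^ e * n + i))
        = fun n => fseq k α (k^e * n + (i+1)) := by
      funext n
      simp only [fseq]
      have : ((k^e*n+i : ℕ):ℝ) + 1 = ((k^e*n+(i+1) : ℕ):ℝ) := by push_cast; ring
      rw [this]
    rw [heq]
    exact spanmem hk hp hq hpq e i hi
  have hfg : (Submodule.span ℤ (Tset k p qq α)).FG := Submodule.fg_span (Tfin k p qq α)
  haveI := isNoetherian_of_fg_of_noetherian _ hfg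
  set P := Submodule.span ℤ (Tset k p qq α)
  set N := Submodule.span ℤ
      {s : ℕ → ℤ | ∃ e i : ℕ, i < k ^ e ∧
        s = fun n => (fun n : ℕ => ⌊α + Real.logb k ((n:ℝ) + 1)⌋) (k ^ e * n + i)}
  have hN : N = Submodule.map P.subtype (N.comap P.subtype) := by
    rw [Submodule.map_comap_subtype, inf_eq_right.mpr hsub]
  rw [hN]
  exact (IsNoetherian.noetherian _).map _
end

section
/- If k ≥ 2 is an integer and α is a real number with k^α irrational, then the sequence {⌊α + log_k(n+1)⌋}_{n≥0} is not k-regular. -/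
set_option maxHeartbeats 1000000

open Real

private lemma floor_log_aux (k : ℕ) (hk : 2 ≤ k) (α : ℝ) (E m n : ℕ) (β δ : ℝ)
    (hn : 2 ≤ (n:ℝ)) (hβ0 : 0 < β) (hβ1 : β ≤ 1) (hδ0 : 0 < δ) (hδ1 : δ < 1)
    (hX : (k:ℝ) ^ ((m:ℝ) - α) = (n:ℝ) + δ) :
    (β < δ → ⌊α + Real.logb k ((k:ℝ)^E * ((n:ℝ) + β))⌋ = (m:ℤ) + E - 1) ∧
    (δ < β → ⌊α + Real.logb k ((k:ℝ)^E * ((n:ℝ) + β))⌋ = (m:ℤ) + E) := by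
  have hk2 : (2:ℝ) ≤ k := by exact_mod_cast hk
  have hk1 : (1:ℝ) < k := by linarith
  have hk0 : (0:ℝ) < k := by linarith
  have hnb : (0:ℝ) < (n:ℝ) + β := by linarith
  have hkE : (0:ℝ) < (k:ℝ)^E := pow_pos hk0 E
  have hsplit : α + Real.logb k ((k:ℝ)^E * ((n:ℝ) + β))
      = (α + Real.logb k ((n:ℝ) + β)) + (E:ℕ) := by
    rw [Real.logb_mul (ne_of_gt hkE) (ne_of_gt hnb), Real.logb_pow,
      Real.logb_self_eq_one hk1]
    push_cast
    ring
  have hXm1 : (k:ℝ)^(((m:ℝ)-1) - α) = ((n:ℝ)+δ) * ((k:ℝ))⁻¹ := by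
    have h : ((m:ℝ)-1) - α = ((m:ℝ) - α) + (-1) := by ring
    rw [h, Real.rpow_add hk0, Real.rpow_neg_one, hX]
  have hXp1 : (k:ℝ)^(((m:ℝ)+1) - α) = ((n:ℝ)+δ) * k := by
    have h : ((m:ℝ)+1) - α = ((m:ℝ) - α) + 1 := by ring
    rw [h, Real.rpow_add hk0, Real.rpow_one, hX]
  rw [hsplit, Int.floor_add_natCast]
  constructor
  · intro hβδ
    have h1 : α + Real.logb k ((n:ℝ)+β) < (m:ℝ) := by
      have := (Real.logb_lt_iff_lt_rpow hk1 hnb).mpr (by rw [hX]; linarith : (n:ℝ)+β < (k:ℝ)^((m:ℝ)-α))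
      linarith
    have h2 : (m:ℝ) - 1 ≤ α + Real.logb k ((n:ℝ)+β) := by
      have hr : (k:ℝ)^(((m:ℝ)-1) - α) ≤ (n:ℝ)+β := by
        rw [hXm1]
        have hki : ((k:ℝ))⁻¹ ≤ (2:ℝ)⁻¹ := by
          rw [inv_le_inv₀ hk0 (by norm_num)]; exact hk2
        have : ((n:ℝ)+δ) * ((k:ℝ))⁻¹ ≤ ((n:ℝ)+δ) * 2⁻¹ := by
          apply mul_le_mul_of_nonneg_left hki (by linarith)
        nlinarith
      have := (Real.le_logb_iff_rpow_le hk1 hnb).mpr hr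
      linarith
    have hfl : ⌊α + Real.logb k ((n:ℝ)+β)⌋ = (m:ℤ) - 1 := by
      rw [Int.floor_eq_iff]
      constructor
      · push_cast; linarith
      · push_cast; linarith
    rw [hfl]; ring
  · intro hδβ
    have h1 : (m:ℝ) ≤ α + Real.logb k ((n:ℝ)+β) := by
      have := (Real.le_logb_iff_rpow_le hk1 hnb).mpr (by rw [hX]; linarith : (k:ℝ)^((m:ℝ)-α) ≤ (n:ℝ)+β)
      linarith
    have h2 : α + Real.logb k ((n:ℝ)+β) < (m:ℝ) + 1 := by
      have hr : (n:ℝ)+β < (k:ℝ)^(((m:ℝ)+1) - α) := by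
        rw [hXp1]; nlinarith
      have := (Real.logb_lt_iff_lt_rpow hk1 hnb).mpr hr
      linarith
    have hfl : ⌊α + Real.logb k ((n:ℝ)+β)⌋ = (m:ℤ) := by
      rw [Int.floor_eq_iff]
      constructor
      · push_cast; linarith
      · push_cast; linarith
    rw [hfl]

theorem stmt14 (k : ℕ) (hk : 2 ≤ k) (α : ℝ)
    (hirr : Irrational ((k : ℝ) ^ α)) :
    ¬ IsKRegular k (fun n => ⌊α + Real.logb k ((n : ℝ) + 1)⌋) := by
  classical
  intro hreg
  obtain ⟨T, hT⟩ := hreg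
  set a : ℕ → ℤ := fun n => ⌊α + Real.logb k ((n : ℝ) + 1)⌋ with ha
  set s : ℕ := T.card + 1 with hs
  have hk2R : (2:ℝ) ≤ k := by exact_mod_cast hk
  have hk1R : (1:ℝ) < k := by linarith
  have hk0R : (0:ℝ) < k := by linarith
  have hka0 : (0:ℝ) < (k:ℝ) ^ α := Real.rpow_pos_of_pos hk0R α
  have hkne : k ≠ 0 := by omega
  set X : ℕ → ℝ := fun m => (k:ℝ) ^ ((m:ℝ) - α) with hXdef
  have hXval : ∀ m : ℕ, X m = ((k^m : ℕ):ℝ) * ((k:ℝ)^α)⁻¹ := by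
    intro m
    show (k:ℝ) ^ ((m:ℝ) - α) = _
    rw [Real.rpow_sub hk0R, Real.rpow_natCast, div_eq_mul_inv]
    push_cast
    ring
  have hXpos : ∀ m, 0 < X m := fun m => Real.rpow_pos_of_pos hk0R _
  have hXirr : ∀ m, Irrational (X m) := by
    intro m
    rw [hXval]
    exact hirr.inv.natCast_mul (pow_ne_zero m hkne)
  have hXdiffirr : ∀ m m' : ℕ, m < m' → Irrational (X m' - X m) := by
    intro m m' hmm
    have hE : X m' - X m = (((k^m' : ℤ) - (k^m : ℤ) : ℤ):ℝ) * ((k:ℝ)^α)⁻¹ := by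
      rw [hXval, hXval]
      push_cast
      ring
    rw [hE]
    refine hirr.inv.intCast_mul ?_
    have : (k:ℤ)^m < (k:ℤ)^m' := pow_lt_pow_right₀ (by exact_mod_cast hk1R) hmm
    omega
  have hXsucc : ∀ m, X (m+1) = k * X m := by
    intro m
    show (k:ℝ) ^ (((m+1 : ℕ):ℝ) - α) = (k:ℝ) * ((k:ℝ) ^ ((m:ℝ) - α))
    have h : (((m+1 : ℕ)):ℝ) - α = 1 + ((m:ℝ) - α) := by push_cast; ring
    rw [h, Real.rpow_add hk0R, Real.rpow_one]
  -- choose a starting index where X is at least 2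
  obtain ⟨M0, hM0⟩ : ∃ M0 : ℕ, 2 ≤ X M0 := by
    obtain ⟨M0, hM⟩ := pow_unbounded_of_one_lt (2 * (k:ℝ)^α) hk1R
    refine ⟨M0, ?_⟩
    rw [hXval]
    have hinv : (0:ℝ) < ((k:ℝ)^α)⁻¹ := by positivity
    have hcast : ((k^M0 : ℕ):ℝ) = (k:ℝ)^(M0:ℕ) := by push_cast; ring
    have h2 : 2 * (k:ℝ)^α * ((k:ℝ)^α)⁻¹ ≤ ((k^M0:ℕ):ℝ) * ((k:ℝ)^α)⁻¹ := by
      apply mul_le_mul_of_nonneg_right _ hinv.le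
      rw [hcast]; exact hM.le
    rwa [mul_assoc, mul_inv_cancel₀ (ne_of_gt hka0), mul_one] at h2
  -- the floors of X (M0 + j)
  have hge2 : ∀ j : ℕ, 2 ≤ X (M0 + j) := by
    intro j
    induction j with
    | zero => simpa using hM0
    | succ j ih =>
      have h1 : X (M0 + (j+1)) = k * X (M0 + j) := by
        rw [← hXsucc (M0 + j)]; ring_nf
      rw [h1]; nlinarith
  set F : ℕ → ℤ := fun j => ⌊X (M0 + j)⌋ with hF
  have hFstep : ∀ j, F j + 2 ≤ F (j+1) := by
    intro j
    have h1 : X (M0 + (j+1)) = k * X (M0 + j) := by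
      rw [← hXsucc (M0 + j)]; ring_nf
    have h2 : X (M0 + j) + 2 ≤ X (M0 + (j+1)) := by rw [h1]; nlinarith [hge2 j]
    have h3 : (F j : ℝ) ≤ X (M0 + j) := Int.floor_le _
    have : ((F j + 2 : ℤ) : ℝ) ≤ X (M0 + (j+1)) := by push_cast; linarith
    exact Int.le_floor.mpr this
  have hFmono : StrictMono F := strictMono_nat_of_lt_succ (fun j => by have := hFstep j; omega)
  have hF2 : ∀ j, 2 ≤ F j := by
    intro j
    exact Int.le_floor.mpr (by exact_mod_cast hge2 j)
  have hspos : 0 < s := Nat.succ_pos _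
  haveI : NeZero s := ⟨by omega⟩
  -- evaluation points and fractional parts
  set nn : Fin s → ℕ := fun u => (F (u : ℕ)).toNat with hnn
  set dl : Fin s → ℝ := fun u => Int.fract (X (M0 + (u : ℕ))) with hdl
  have hnncast : ∀ u : Fin s, ((nn u : ℕ) : ℤ) = F (u : ℕ) := by
    intro u; exact Int.toNat_of_nonneg (by have := hF2 (u:ℕ); omega)
  have hnn2 : ∀ u : Fin s, (2:ℝ) ≤ ((nn u : ℕ):ℝ) := by
    intro u
    have h1 : (2:ℤ) ≤ ((nn u : ℕ):ℤ) := by rw [hnncast]; exact hF2 _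
    exact_mod_cast h1
  have hnninj : Function.Injective nn := by
    intro u v huv
    have h1 : F (u:ℕ) = F (v:ℕ) := by
      rw [← hnncast u, ← hnncast v, huv]
    exact Fin.ext (hFmono.injective h1)
  have hXsplit : ∀ u : Fin s, X (M0 + (u:ℕ)) = ((nn u : ℕ):ℝ) + dl u := by
    intro u
    have h1 : ((nn u : ℕ):ℝ) = ((F (u:ℕ) : ℤ):ℝ) := by exact_mod_cast hnncast u
    rw [h1]
    exact (Int.floor_add_fract _).symm
  have hdl1 : ∀ u, dl u < 1 := fun u => Int.fract_lt_one _
  have hdlirr : ∀ u : Fin s, Irrational (dl u) := by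
    intro u
    have : dl u = X (M0 + (u:ℕ)) - (⌊X (M0 + (u:ℕ))⌋ : ℤ) := rfl
    rw [this]
    exact (hXirr _).sub_intCast _
  have hdl0 : ∀ u, 0 < dl u := by
    intro u
    rcases lt_or_eq_of_le (Int.fract_nonneg (X (M0 + (u:ℕ)))) with h | h
    · exact h
    · exfalso
      have h0 : X (M0 + (u:ℕ)) - (⌊X (M0 + (u:ℕ))⌋ : ℤ) = 0 := by
        rw [Int.self_sub_floor]; exact h.symm
      exact (hXirr (M0 + (u:ℕ))).ne_int ⌊X (M0 + (u:ℕ))⌋ (by linarith [sub_eq_zero.mp h0])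
  have hdldist : ∀ u v : Fin s, u ≠ v → dl u ≠ dl v := by
    intro u v huv h
    obtain ⟨z, hz⟩ := Int.fract_eq_fract.mp h
    have hne : (u:ℕ) ≠ (v:ℕ) := fun hc => huv (Fin.ext hc)
    rcases Nat.lt_or_ge (u:ℕ) (v:ℕ) with hlt | hge
    · have hI := hXdiffirr (M0 + (u:ℕ)) (M0 + (v:ℕ)) (by omega)
      exact hI.ne_int (-z) (by push_cast; linarith)
    · have hlt' : (v:ℕ) < (u:ℕ) := by omega
      have hI := hXdiffirr (M0 + (v:ℕ)) (M0 + (u:ℕ)) (by omega)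
      exact hI.ne_int z (by push_cast; linarith)
  -- a uniform separation scale
  have hnonempty : (Finset.univ : Finset (Fin s × Fin s)).Nonempty := ⟨(⟨0, hspos⟩, ⟨0, hspos⟩), Finset.mem_univ _⟩
  set g : Fin s × Fin s → ℝ := fun p => if p.1 = p.2 then dl p.1 else |dl p.1 - dl p.2| / 2 with hg
  set ε : ℝ := Finset.univ.inf' hnonempty g with hε
  have hε0 : 0 < ε := by
    rw [hε, Finset.lt_inf'_iff]
    intro p _
    rw [hg]
    by_cases hp : p.1 = p.2
    · simpa [hp] using hdl0 p.2
    · simp only [hp, if_false]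
      have : dl p.1 - dl p.2 ≠ 0 := sub_ne_zero.mpr (hdldist _ _ hp)
      positivity
  have hεδ : ∀ u : Fin s, ε ≤ dl u := by
    intro u
    have h1 := Finset.inf'_le g (Finset.mem_univ (u, u))
    have h2 : g (u,u) = dl u := by rw [hg]; simp
    rw [← hε] at h1
    rw [h2] at h1; exact h1
  have hεsep : ∀ u v : Fin s, u ≠ v → 2 * ε ≤ |dl u - dl v| := by
    intro u v huv
    have h1 := Finset.inf'_le g (Finset.mem_univ (u, v))
    have h2 : g (u,v) = |dl u - dl v| / 2 := by rw [hg]; simp [huv]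
    rw [← hε] at h1
    rw [h2] at h1
    linarith
  -- choose the resolution E
  obtain ⟨E, hE⟩ := pow_unbounded_of_one_lt (2/ε) hk1R
  have hkE0 : (0:ℝ) < (k:ℝ)^E := pow_pos hk0R E
  have hE' : 2 / (k:ℝ)^E < ε := by
    rw [div_lt_iff₀ hkE0]
    rw [div_lt_iff₀ hε0] at hE
    nlinarith
  have hkEcast : ((k^E : ℕ):ℝ) = (k:ℝ)^E := by push_cast; ring
  -- ceilings of the scaled fractional parts
  set c : Fin s → ℤ := fun u => ⌈dl u * (k:ℝ)^E⌉ with hc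
  have hdlkEirr : ∀ u, Irrational (dl u * (k:ℝ)^E) := by
    intro u
    rw [← hkEcast]
    exact (hdlirr u).mul_natCast (pow_ne_zero E hkne)
  have hdlkE2 : ∀ u, 2 < dl u * (k:ℝ)^E := by
    intro u
    have h1 : 2 / (k:ℝ)^E < dl u := lt_of_lt_of_le hE' (hεδ u)
    rw [div_lt_iff₀ hkE0] at h1
    linarith
  have hc2 : ∀ u, 2 ≤ c u := by
    intro u
    have h1 : (1:ℤ) < c u := Int.lt_ceil.mpr (by push_cast; linarith [hdlkE2 u])
    omega
  have hcK : ∀ u, c u ≤ ((k^E : ℕ) : ℤ) := by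
    intro u
    apply Int.ceil_le.mpr
    have h1 : dl u * (k:ℝ)^E < (k:ℝ)^E := by nlinarith [hdl1 u, hdl0 u]
    push_cast
    linarith
  have hclt : ∀ u, (c u : ℝ) < dl u * (k:ℝ)^E + 1 := fun u => Int.ceil_lt_add_one _
  have hltc : ∀ u, dl u * (k:ℝ)^E < (c u : ℝ) :=
    fun u => lt_of_le_of_ne (Int.le_ceil _) ((hdlkEirr u).ne_int (c u))
  -- the two digit choices
  set iP : Fin s → ℕ := fun u => (c u - 1).toNat with hiP
  set iM : Fin s → ℕ := fun u => (c u - 2).toNat with hiM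
  have hiPZ : ∀ u, ((iP u : ℕ) : ℤ) = c u - 1 := by
    intro u; exact Int.toNat_of_nonneg (by have := hc2 u; omega)
  have hiMZ : ∀ u, ((iM u : ℕ) : ℤ) = c u - 2 := by
    intro u; exact Int.toNat_of_nonneg (by have := hc2 u; omega)
  have hiPlt : ∀ u, iP u < k^E := by
    intro u
    have h1 : ((iP u : ℕ):ℤ) < ((k^E : ℕ):ℤ) := by rw [hiPZ]; have := hcK u; omega
    exact_mod_cast h1
  have hiMlt : ∀ u, iM u < k^E := by
    intro u
    have h1 : ((iM u : ℕ):ℤ) < ((k^E : ℕ):ℤ) := by rw [hiMZ]; have := hcK u; omega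
    exact_mod_cast h1
  -- value of `a` on the arithmetic progressions at the evaluation points
  have hval : ∀ (i : ℕ) (v : Fin s), i < k^E →
      a (k^E * nn v + i) = ⌊α + Real.logb k ((k:ℝ)^E * (((nn v : ℕ):ℝ) + ((i:ℝ)+1)/(k:ℝ)^E))⌋ := by
    intro i v _
    have harg : ((k^E * nn v + i : ℕ):ℝ) + 1 = (k:ℝ)^E * (((nn v : ℕ):ℝ) + ((i:ℝ)+1)/(k:ℝ)^E) := by
      field_simp
      push_cast
      ring
    show ⌊α + Real.logb k (((k^E * nn v + i : ℕ):ℝ) + 1)⌋ = _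
    rw [harg]
  -- the key matrix identity
  have hεkE : 2 < ε * (k:ℝ)^E := by
    rw [div_lt_iff₀ hkE0] at hE'
    linarith
  have hMat : ∀ u v : Fin s,
      a (k^E * nn v + iP u) - a (k^E * nn v + iM u) = if v = u then 1 else 0 := by
    intro u v
    have hβPc : ((iP u : ℕ):ℝ) + 1 = (c u : ℝ) := by
      have h : (((iP u : ℕ) : ℤ) : ℝ) = ((c u - 1 : ℤ) : ℝ) := by rw [hiPZ u]
      push_cast at h
      linarith
    have hβMc : ((iM u : ℕ):ℝ) + 1 = (c u : ℝ) - 1 := by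
      have h : (((iM u : ℕ) : ℤ) : ℝ) = ((c u - 2 : ℤ) : ℝ) := by rw [hiMZ u]
      push_cast at h
      linarith
    have hcKR : (c u : ℝ) ≤ (k:ℝ)^E := by
      have := hcK u
      rw [← hkEcast]
      exact_mod_cast this
    have hc2R : (2:ℝ) ≤ (c u : ℝ) := by exact_mod_cast hc2 u
    have hβ0P : 0 < (((iP u : ℕ):ℝ)+1)/(k:ℝ)^E := by positivity
    have hβ1P : (((iP u : ℕ):ℝ)+1)/(k:ℝ)^E ≤ 1 := by
      rw [div_le_one hkE0, hβPc]; exact hcKR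
    have hβ0M : 0 < (((iM u : ℕ):ℝ)+1)/(k:ℝ)^E := by positivity
    have hβ1M : (((iM u : ℕ):ℝ)+1)/(k:ℝ)^E ≤ 1 := by
      rw [div_le_one hkE0, hβMc]; linarith
    have hAP := floor_log_aux k hk α E (M0 + (v:ℕ)) (nn v) ((((iP u : ℕ):ℝ)+1)/(k:ℝ)^E)
      (dl v) (hnn2 v) hβ0P hβ1P (hdl0 v) (hdl1 v) (hXsplit v)
    have hAM := floor_log_aux k hk α E (M0 + (v:ℕ)) (nn v) ((((iM u : ℕ):ℝ)+1)/(k:ℝ)^E)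
      (dl v) (hnn2 v) hβ0M hβ1M (hdl0 v) (hdl1 v) (hXsplit v)
    rw [hval _ v (hiPlt u), hval _ v (hiMlt u)]
    by_cases hvu : v = u
    · subst hvu
      have h1 : dl v < (((iP v : ℕ):ℝ)+1)/(k:ℝ)^E := by
        rw [lt_div_iff₀ hkE0, hβPc]
        exact hltc v
      have h2 : (((iM v : ℕ):ℝ)+1)/(k:ℝ)^E < dl v := by
        rw [div_lt_iff₀ hkE0, hβMc]
        have := hclt v
        linarith
      rw [hAP.2 h1, hAM.1 h2, if_pos rfl]
      ring
    · have hsep : 2 * ε ≤ |dl u - dl v| := hεsep u v (fun h => hvu h.symm)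
      rcases (hdldist v u hvu).lt_or_gt with hlt | hlt
      · -- dl v < dl u : both β's are above dl v
        have habs : |dl u - dl v| = dl u - dl v := abs_of_pos (by linarith)
        rw [habs] at hsep
        have hmul : (2*ε) * (k:ℝ)^E ≤ (dl u - dl v) * (k:ℝ)^E :=
          mul_le_mul_of_nonneg_right hsep hkE0.le
        have h2 : (((iM u : ℕ):ℝ)+1)/(k:ℝ)^E > dl v := by
          rw [gt_iff_lt, lt_div_iff₀ hkE0, hβMc]
          nlinarith [hltc u]
        have h1 : (((iP u : ℕ):ℝ)+1)/(k:ℝ)^E > dl v := by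
          rw [gt_iff_lt, lt_div_iff₀ hkE0, hβPc]
          nlinarith [hltc u]
        rw [hAP.2 h1, hAM.2 h2, if_neg hvu]
        ring
      · -- dl u < dl v : both β's are below dl v
        have habs : |dl u - dl v| = dl v - dl u := by rw [abs_of_neg (by linarith : dl u - dl v < 0)]; ring
        rw [habs] at hsep
        have hmul : (2*ε) * (k:ℝ)^E ≤ (dl v - dl u) * (k:ℝ)^E :=
          mul_le_mul_of_nonneg_right hsep hkE0.le
        have h1 : (((iP u : ℕ):ℝ)+1)/(k:ℝ)^E < dl v := by
          rw [div_lt_iff₀ hkE0, hβPc]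
          nlinarith [hclt u]
        have h2 : (((iM u : ℕ):ℝ)+1)/(k:ℝ)^E < dl v := by
          rw [div_lt_iff₀ hkE0, hβMc]
          nlinarith [hclt u]
        rw [hAP.1 h1, hAM.1 h2, if_neg hvu]
        ring
  -- membership of the kernel sequences
  have hPmem : ∀ u : Fin s, (fun n => a (k^E * n + iP u))
      ∈ Submodule.span ℤ {f : ℕ → ℤ | ∃ e i : ℕ, i < k ^ e ∧ f = fun n => a (k ^ e * n + i)} :=
    fun u => Submodule.subset_span ⟨E, iP u, hiPlt u, rfl⟩
  have hMmem : ∀ u : Fin s, (fun n => a (k^E * n + iM u))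
      ∈ Submodule.span ℤ {f : ℕ → ℤ | ∃ e i : ℕ, i < k ^ e ∧ f = fun n => a (k ^ e * n + i)} :=
    fun u => Submodule.subset_span ⟨E, iM u, hiMlt u, rfl⟩
  -- evaluation map
  set Φ : (ℕ → ℤ) →ₗ[ℤ] (Fin s → ℚ) :=
    { toFun := fun f v => ((f (nn v) : ℤ) : ℚ)
      map_add' := by intro f g; funext v; push_cast [Pi.add_apply]; ring
      map_smul' := by
        intro z f; funext v
        simp only [Pi.smul_apply, smul_eq_mul, RingHom.id_apply, zsmul_eq_mul]
        push_cast
        ring } with hΦ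
  set N : Submodule ℚ (Fin s → ℚ) := Submodule.span ℚ (⇑Φ '' ↑T) with hN
  have hkey : ∀ f, f ∈ Submodule.span ℤ
      {f : ℕ → ℤ | ∃ e i : ℕ, i < k ^ e ∧ f = fun n => a (k ^ e * n + i)} → Φ f ∈ N := by
    intro f hf
    rw [← hT] at hf
    have h2 : Φ f ∈ Submodule.map Φ (Submodule.span ℤ (↑T : Set (ℕ → ℤ))) :=
      Submodule.mem_map_of_mem hf
    rw [Submodule.map_span] at h2
    have h3 : Submodule.span ℤ (⇑Φ '' ↑T) ≤ Submodule.restrictScalars ℤ N :=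
      Submodule.span_le.mpr Submodule.subset_span
    exact h3 h2
  -- the standard basis vectors lie in N
  have hbmem : ∀ u : Fin s, (fun v => if v = u then (1:ℚ) else 0) ∈ N := by
    intro u
    have hw : ((fun n => a (k^E * n + iP u)) - (fun n => a (k^E * n + iM u)) : ℕ → ℤ)
        ∈ Submodule.span ℤ
          {f : ℕ → ℤ | ∃ e i : ℕ, i < k ^ e ∧ f = fun n => a (k ^ e * n + i)} :=
      sub_mem (hPmem u) (hMmem u)
    have hΦw : Φ ((fun n => a (k^E * n + iP u)) - (fun n => a (k^E * n + iM u)))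
        = fun v => if v = u then (1:ℚ) else 0 := by
      funext v
      calc Φ ((fun n => a (k^E * n + iP u)) - (fun n => a (k^E * n + iM u))) v
          = ((a (k^E * nn v + iP u) - a (k^E * nn v + iM u) : ℤ) : ℚ) := rfl
        _ = (((if v = u then 1 else 0) : ℤ) : ℚ) := by rw [hMat u v]
        _ = (if v = u then (1:ℚ) else 0) := by split_ifs <;> simp
    rw [← hΦw]
    exact hkey _ hw
  have hNtop : N = ⊤ := by
    rw [eq_top_iff]
    rintro x -
    have hx : x = ∑ u : Fin s, x u • (fun v => if v = u then (1:ℚ) else 0) := by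
      funext v
      rw [Finset.sum_apply]
      simp only [Pi.smul_apply, smul_eq_mul, mul_ite, mul_one, mul_zero]
      rw [Finset.sum_ite_eq]
      simp
    rw [hx]
    exact Submodule.sum_mem _ fun u _ => Submodule.smul_mem _ _ (hbmem u)
  have h1 : Module.finrank ℚ N ≤ T.card := by
    have himg : (⇑Φ '' ↑T) = ((T.image ⇑Φ : Finset (Fin s → ℚ)) : Set (Fin s → ℚ)) := by
      rw [Finset.coe_image]
    rw [hN, himg]
    exact le_trans (finrank_span_finset_le_card _) Finset.card_image_le
  have h2 : Module.finrank ℚ N = s := by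
    rw [hNtop, finrank_top]
    simp [Module.finrank_fin_fun]
  omega
end

section
/- If a sequence of integers satisfies a linear recurrence with polynomial coefficients (i.e., is polynomial-recursive / P-recursive) and takes only finitely many distinct values, then it is eventually periodic. -/
theorem stmt15 (a : ℕ → ℤ)
    (hrec : ∃ (d : ℕ) (p : Fin (d + 1) → Polynomial ℤ) (N : ℕ),
        p (Fin.last d) ≠ 0 ∧
        ∀ n ≥ N, ∑ j : Fin (d + 1), (p j).eval (n : ℤ) * a (n + j) = 0)
    (hfin : (Set.range a).Finite) :
    ∃ N p : ℕ, 0 < p ∧ ∀ n ≥ N, a (n + p) = a n := by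
  classical
  obtain ⟨d, p, N, hpd, hrec⟩ := hrec
  -- the polynomial attached to a window of values
  set q : (Fin (d+1) → ℤ) → Polynomial ℤ :=
    fun w => ∑ j, Polynomial.C (w j) * p j with hq
  have hqeval : ∀ (w : Fin (d+1) → ℤ) (x : ℤ),
      (q w).eval x = ∑ j, (p j).eval x * w j := by
    intro w x
    simp [hq, Polynomial.eval_finset_sum, mul_comm]
  -- the set of possible value tuples is finite
  have hU : {w : Fin (d+1) → ℤ | ∀ j, w j ∈ Set.range a}.Finite := by
    have h := Set.Finite.pi (fun _ : Fin (d+1) => hfin)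
    convert h using 1
    ext w; simp [Set.mem_pi]
  set F : Finset (Fin (d+1) → ℤ) := hU.toFinset with hF
  set R : Finset ℤ := F.sup (fun w => (q w).roots.toFinset) with hR
  set M : ℕ := R.sup Int.toNat with hM
  set N₁ : ℕ := max N (M + 1) with hN₁
  -- beyond all roots, vanishing of the evaluation forces vanishing of the polynomial
  have key0 : ∀ (w : Fin (d+1) → ℤ), (∀ j, w j ∈ Set.range a) →
      ∀ n : ℕ, N₁ ≤ n → (q w).eval (n : ℤ) = 0 → q w = 0 := by
    intro w hw n hn he
    by_contra h0
    have hroot : (n : ℤ) ∈ (q w).roots := by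
      rw [Polynomial.mem_roots h0]
      exact he
    have hwF : w ∈ F := by simpa [hF] using hw
    have hsub : (q w).roots.toFinset ≤ R :=
      Finset.le_sup (f := fun w => (q w).roots.toFinset) hwF
    have hnR : (n : ℤ) ∈ R := hsub (Multiset.mem_toFinset.2 hroot)
    have : ((n : ℤ)).toNat ≤ M := Finset.le_sup (f := Int.toNat) hnR
    simp only [Int.toNat_natCast] at this
    have : M + 1 ≤ n := le_trans (le_max_right _ _) hn
    omega
  -- for n ≥ N₁, the window polynomial vanishes identically
  have key1 : ∀ n : ℕ, N₁ ≤ n → q (fun j => a (n + j)) = 0 := by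
    intro n hn
    apply key0 _ (fun j => ⟨n + j, rfl⟩) n hn
    rw [hqeval]
    exact hrec n (le_trans (le_max_left _ _) hn)
  -- determinism: equal length-d windows beyond N₁ give equal next values
  have key : ∀ m n : ℕ, N₁ ≤ m → N₁ ≤ n →
      (∀ j : Fin d, a (m + j) = a (n + j)) → a (m + d) = a (n + d) := by
    intro m n hm hn hw
    have h1 : q (fun j => a (m + j)) = 0 := key1 m hm
    have h2 : q (fun j => a (n + j)) = 0 := key1 n hn
    have hdiff : q (fun j => a (m + j)) - q (fun j => a (n + j))
        = Polynomial.C (a (m + d) - a (n + d)) * p (Fin.last d) := by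
      rw [hq]
      simp only
      rw [← Finset.sum_sub_distrib]
      rw [Finset.sum_eq_single (Fin.last d)]
      · simp [Fin.val_last, ← sub_mul, ← Polynomial.C_sub]
      · intro j _ hj
        have hjlt : (j : ℕ) < d := Fin.val_lt_last hj
        have := hw ⟨j, hjlt⟩
        simp only [Fin.val_mk] at this
        rw [this]
        ring
      · simp
    rw [h1, h2, sub_zero] at hdiff
    have := mul_eq_zero.mp hdiff.symm
    rcases this with h | h
    · have := Polynomial.C_eq_zero.mp h
      linarith
    · exact absurd h hpd
  -- pigeonhole on length-d windows
  set W : ℕ → (Fin d → ℤ) := fun n j => a (n + j) with hW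
  have hV : {f : Fin d → ℤ | ∀ j, f j ∈ Set.range a}.Finite := by
    have h := Set.Finite.pi (fun _ : Fin d => hfin)
    convert h using 1
    ext w; simp [Set.mem_pi]
  have hmaps : Set.MapsTo W (Set.Ici N₁) {f : Fin d → ℤ | ∀ j, f j ∈ Set.range a} := by
    intro n _ 
    exact fun j => ⟨n + j, rfl⟩
  obtain ⟨m, hm, m', hm', hne, heq⟩ :=
    Set.Infinite.exists_ne_map_eq_of_mapsTo (Set.Ici_infinite N₁) hmaps hV
  -- main argument, for m < m'
  have main : ∀ m m' : ℕ, N₁ ≤ m → m < m' → W m = W m' →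
      ∃ N p : ℕ, 0 < p ∧ ∀ n ≥ N, a (n + p) = a n := by
    intro m m' hm hlt hWeq
    set per : ℕ := m' - m with hper
    have hper0 : 0 < per := by omega
    have hmper : m + per = m' := by omega
    have claim : ∀ k : ℕ, a (m + k + per) = a (m + k) := by
      intro k
      induction k using Nat.strong_induction_on with
      | _ k ih =>
        rcases lt_or_ge k d with hk | hk
        · have h1 : W m ⟨k, hk⟩ = W m' ⟨k, hk⟩ := by rw [hWeq]
          simp only [hW] at h1
          have : m + k + per = m' + k := by omega
          rw [this]
          exact h1.symm
        · set k' : ℕ := k - d with hk'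
          have hkd : k = k' + d := by omega
          have hwin : ∀ j : Fin d, a (m + k' + per + j) = a (m + k' + j) := by
            intro j
            have h1 : m + k' + per + (j : ℕ) = m + (k' + j) + per := by omega
            have h2 : m + k' + (j : ℕ) = m + (k' + j) := by omega
            rw [h1, h2]
            exact ih (k' + j) (by omega)
          have := key (m + k' + per) (m + k') (by omega) (by omega) hwin
          have h3 : m + k' + per + d = m + k + per := by omega
          have h4 : m + k' + d = m + k := by omega
          rwa [h3, h4] at this
    refine ⟨m, per, hper0, ?_⟩
    intro n hn
    have h := claim (n - m)
    have h1 : m + (n - m) = n := by omega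
    rwa [h1] at h
  rcases hne.lt_or_gt with h | h
  · exact main m m' hm h heq
  · exact main m' m hm' h heq.symm
end

section
/- Let k ≥ 2 be an integer and α a real number with k^α irrational, and let β = α − ⌊α⌋. Then the sequence d(m) = ⌊−k^(m+1−β)⌋ − k·⌊−k^(m−β)⌋ (m ≥ 1) is not eventually periodic. -/
theorem stmt16 (k : ℕ) (hk : 2 ≤ k) (α β : ℝ) (hβ : β = α - ⌊α⌋)
    (hirr : Irrational ((k : ℝ) ^ α)) :
    ¬ ∃ N p : ℕ, 0 < p ∧ ∀ m ≥ N, 1 ≤ m →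
        ⌊-(k : ℝ) ^ ((m : ℝ) + (p : ℝ) + 1 - β)⌋ - k * ⌊-(k : ℝ) ^ ((m : ℝ) + (p : ℝ) - β)⌋ =
          ⌊-(k : ℝ) ^ ((m : ℝ) + 1 - β)⌋ - k * ⌊-(k : ℝ) ^ ((m : ℝ) - β)⌋ := by
  rintro ⟨N, p, hp, hper⟩
  have hk2 : (2:ℝ) ≤ (k:ℝ) := by exact_mod_cast hk
  have hk0 : (0:ℝ) < (k:ℝ) := by linarith
  set x : ℝ := (k:ℝ) ^ (-β) with hx
  have hxpos : 0 < x := Real.rpow_pos_of_pos hk0 _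
  set y : ℕ → ℝ := fun n => -(k:ℝ) ^ ((n:ℝ) - β) with hy
  have hyval : ∀ n : ℕ, y n = -((k:ℝ) ^ n * x) := by
    intro n
    simp only [hy, hx]
    rw [sub_eq_add_neg, Real.rpow_add hk0, Real.rpow_natCast]
  set M := max N 1 with hM
  set u : ℕ → ℤ := fun m => ⌊y (m + p)⌋ - ⌊y m⌋ with hu
  -- recurrence
  have hrec : ∀ m ≥ M, u (m + 1) = k * u m := by
    intro m hm
    have h1 : N ≤ m := le_trans (le_max_left _ _) hm
    have h2 : 1 ≤ m := le_trans (le_max_right _ _) hm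
    have H := hper m h1 h2
    have e1 : (m:ℝ) + (p:ℝ) + 1 - β = ((m + 1 + p : ℕ):ℝ) - β := by push_cast; ring
    have e2 : (m:ℝ) + (p:ℝ) - β = ((m + p : ℕ):ℝ) - β := by push_cast; ring
    have e3 : (m:ℝ) + 1 - β = ((m + 1 : ℕ):ℝ) - β := by push_cast; ring
    rw [e1, e2, e3] at H
    simp only [hu, hy]
    linarith [H]
  -- iterate
  have hiter : ∀ n : ℕ, u (M + n) = (k:ℤ) ^ n * u M := by
    intro n
    induction n with
    | zero => simp
    | succ n ih =>
      have : M + (n + 1) = (M + n) + 1 := by ring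
      rw [this, hrec (M + n) (Nat.le_add_right _ _), ih]
      ring
  -- bound
  set C : ℝ := ((k:ℝ) ^ (M + p) - (k:ℝ) ^ M) * x with hC
  have hbound : ∀ n : ℕ, (k:ℝ) ^ n * |(u M : ℝ) + C| < 1 := by
    intro n
    have hfl : ∀ a b : ℝ, |((⌊a⌋ - ⌊b⌋ : ℤ) : ℝ) - (a - b)| < 1 := by
      intro a b
      have h1 := Int.floor_le a
      have h2 := Int.sub_one_lt_floor a
      have h3 := Int.floor_le b
      have h4 := Int.sub_one_lt_floor b
      rw [abs_lt]
      push_cast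
      constructor <;> linarith
    have key := hfl (y (M + n + p)) (y (M + n))
    have hval : y (M + n + p) - y (M + n) = -((k:ℝ)^n * C) := by
      rw [hyval, hyval, hC]
      have : (k:ℝ) ^ (M + n + p) = (k:ℝ)^n * (k:ℝ)^(M+p) := by ring
      rw [this]
      have : (k:ℝ) ^ (M + n) = (k:ℝ)^n * (k:ℝ)^M := by ring
      rw [this]
      ring
    have huMn : ((u (M + n) : ℤ) : ℝ) = (k:ℝ)^n * (u M : ℝ) := by
      rw [hiter n]; push_cast; ring
    have : ((⌊y (M + n + p)⌋ - ⌊y (M + n)⌋ : ℤ) : ℝ) = (k:ℝ)^n * (u M : ℝ) := by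
      rw [← huMn]
    rw [this, hval] at key
    calc (k:ℝ) ^ n * |(u M : ℝ) + C| = |(k:ℝ)^n * ((u M : ℝ) + C)| := by
          rw [abs_mul, abs_of_pos (pow_pos hk0 n)]
      _ = |(k:ℝ)^n * (u M : ℝ) - -((k:ℝ)^n * C)| := by congr 1; ring
      _ < 1 := key
  -- conclude c = 0
  have hc0 : (u M : ℝ) + C = 0 := by
    by_contra hc
    have habs : 0 < |(u M : ℝ) + C| := abs_pos.mpr hc
    have hinv : (k:ℝ)⁻¹ < 1 := by
      rw [inv_lt_one_iff₀]; right; linarith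
    obtain ⟨n, hn⟩ := exists_pow_lt_of_lt_one habs hinv
    have := hbound n
    have hkn : (0:ℝ) < (k:ℝ)^n := pow_pos hk0 n
    rw [inv_pow] at hn
    have : (1:ℝ) < (k:ℝ)^n * |(u M : ℝ) + C| := by
      rw [inv_lt_iff_one_lt_mul₀ hkn] at hn
      linarith [hn]
    linarith [hbound n]
  -- x is rational
  have hD : (0:ℝ) < (k:ℝ) ^ (M + p) - (k:ℝ) ^ M := by
    have : (k:ℝ)^M < (k:ℝ)^(M+p) := by
      apply pow_lt_pow_right₀ (by linarith)
      omega
    linarith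
  have hxval : x = -(u M : ℝ) / ((k:ℝ) ^ (M + p) - (k:ℝ) ^ M) := by
    rw [eq_div_iff (ne_of_gt hD)]
    rw [hC] at hc0
    linarith [hc0]
  set q : ℚ := -(u M : ℚ) / ((k:ℚ) ^ (M + p) - (k:ℚ) ^ M) with hq
  have hqx : (q:ℝ) = x := by
    rw [hxval, hq]; push_cast; ring
  have hq0 : q ≠ 0 := by
    intro h
    rw [h] at hqx
    simp at hqx
    linarith [hxpos, hqx]
  -- k^α rational, contradiction
  apply hirr
  refine ⟨(k:ℚ) ^ (⌊α⌋ : ℤ) * q⁻¹, ?_⟩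
  have hα : α = (⌊α⌋ : ℝ) + β := by rw [hβ]; ring
  have hsplitα : (k:ℝ) ^ α = (k:ℝ) ^ ((⌊α⌋:ℤ):ℝ) * (k:ℝ) ^ β := by
    conv_lhs => rw [hα]
    rw [Real.rpow_add hk0]
  rw [hsplitα, Real.rpow_intCast]
  have hxβ : (k:ℝ) ^ β = x⁻¹ := by
    rw [hx, Real.rpow_neg (le_of_lt hk0), inv_inv]
  rw [hxβ, ← hqx]
  push_cast
  ring
end
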